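/- If (M,𝔛) ⊨ ACA₀ and U is a generic ultrafilter on P_𝔛 (i.e., U meets every dense subset of P_𝔛 that is parameter-definable in the second-order structure (M,𝔛)), then U is complete and definable. -/
import Mathlib


namespace Paper

/-! ### Syntax of (second-order) arithmetic.

Terms of the language `L_A = {0, 1, +, ·, <}`, with number variables indexed by `ℕ`.
Formulas also allow atomic formulas `t ∈ X_k` (membership in a set variable) and
set quantifiers `allS`; first-order formulas are those avoiding both. -/

inductive PTerm where
  | var : ℕ → PTerm
  | zero : PTerm
  | one : PTerm
  | add : PTerm → PTerm → PTerm
  | mul : PTerm → PTerm → PTerm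

inductive Fml where
  | eq : PTerm → PTerm → Fml
  | lt : PTerm → PTerm → Fml
  | mem : PTerm → ℕ → Fml
  | not : Fml → Fml
  | imp : Fml → Fml → Fml
  | all : ℕ → Fml → Fml
  | allS : ℕ → Fml → Fml

def Fml.and (φ ψ : Fml) : Fml := .not (.imp φ (.not ψ))
def Fml.or (φ ψ : Fml) : Fml := .imp (.not φ) ψ
def Fml.iff (φ ψ : Fml) : Fml := (Fml.imp φ ψ).and (Fml.imp ψ φ)
def Fml.ex (x : ℕ) (φ : Fml) : Fml := .not (.all x (.not φ))
def Fml.exS (k : ℕ) (φ : Fml) : Fml := .not (.allS k (.not φ))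

/-- A structure for the language `{0, 1, +, ·, <}` on a carrier `M`
(bundled, so that several structures can live on the same carrier). -/
structure AStr (M : Type) where
  zero : M
  one : M
  add : M → M → M
  mul : M → M → M
  lt : M → M → Prop

/-- The standard model of arithmetic. -/
def natStr : AStr ℕ := ⟨0, 1, (· + ·), (· * ·), (· < ·)⟩

namespace PTerm

def vars : PTerm → Finset ℕ
  | var n => {n}
  | zero => ∅
  | one => ∅
  | add t u => t.vars ∪ u.vars
  | mul t u => t.vars ∪ u.vars

/-- Substitution of a term `r` for the variable `x` (used only with `r` closed or
with `vars r ⊆ {x}`, in which case it is capture-free). -/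
def subst (x : ℕ) (r : PTerm) : PTerm → PTerm
  | var n => if n = x then r else var n
  | zero => zero
  | one => one
  | add t u => add (subst x r t) (subst x r u)
  | mul t u => mul (subst x r t) (subst x r u)

def val {M : Type} (S : AStr M) (v : ℕ → M) : PTerm → M
  | var n => v n
  | zero => S.zero
  | one => S.one
  | add t u => S.add (t.val S v) (u.val S v)
  | mul t u => S.mul (t.val S v) (u.val S v)

end PTerm

namespace Fml

/-- Free number variables. -/
def freeN : Fml → Finset ℕ
  | eq t u => t.vars ∪ u.vars
  | lt t u => t.vars ∪ u.vars
  | mem t _ => t.vars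
  | not φ => φ.freeN
  | imp φ ψ => φ.freeN ∪ ψ.freeN
  | all x φ => φ.freeN.erase x
  | allS _ φ => φ.freeN

/-- Substitution of a term `r` for the (free) variable `x`. -/
def substN (x : ℕ) (r : PTerm) : Fml → Fml
  | eq t u => eq (PTerm.subst x r t) (PTerm.subst x r u)
  | lt t u => lt (PTerm.subst x r t) (PTerm.subst x r u)
  | mem t k => mem (PTerm.subst x r t) k
  | not φ => not (substN x r φ)
  | imp φ ψ => imp (substN x r φ) (substN x r ψ)
  | all y φ => if y = x then all y φ else all y (substN x r φ)
  | allS k φ => allS k (substN x r φ)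

/-- First-order formulas: no set variables, no set quantifiers. -/
def IsFO : Fml → Prop
  | eq _ _ => True
  | lt _ _ => True
  | mem _ _ => False
  | not φ => φ.IsFO
  | imp φ ψ => φ.IsFO ∧ ψ.IsFO
  | all _ φ => φ.IsFO
  | allS _ _ => False

/-- Arithmetical formulas: set variables allowed as parameters, but no set quantifiers. -/
def IsArith : Fml → Prop
  | eq _ _ => True
  | lt _ _ => True
  | mem _ _ => True
  | not φ => φ.IsArith
  | imp φ ψ => φ.IsArith ∧ ψ.IsArith
  | all _ φ => φ.IsArith
  | allS _ _ => False

end Fml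

/-! ### Satisfaction -/

/-- Satisfaction for a second-order structure `(M, 𝔛)`: number quantifiers range over `M`,
set quantifiers range over `𝔛`. -/
def Sat {M : Type} (S : AStr M) (𝔛 : Set (Set M)) : (ℕ → M) → (ℕ → Set M) → Fml → Prop
  | v, _, .eq t u => t.val S v = u.val S v
  | v, _, .lt t u => S.lt (t.val S v) (u.val S v)
  | v, w, .mem t k => t.val S v ∈ w k
  | v, w, .not φ => ¬ Sat S 𝔛 v w φ
  | v, w, .imp φ ψ => Sat S 𝔛 v w φ → Sat S 𝔛 v w ψ
  | v, w, .all x φ => ∀ a : M, Sat S 𝔛 (Function.update v x a) w φ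
  | v, w, .allS k φ => ∀ X ∈ 𝔛, Sat S 𝔛 v (Function.update w k X) φ

/-- First-order satisfaction. -/
def SatFO {M : Type} (S : AStr M) (v : ℕ → M) (φ : Fml) : Prop :=
  Sat S Set.univ v (fun _ => ∅) φ

/-- `M ⊨ T` for a first-order theory `T`. -/
def ModelsT {M : Type} (S : AStr M) (T : Set Fml) : Prop :=
  ∀ φ ∈ T, ∀ v, SatFO S v φ

/-- Semantic consequence (equivalently, by the completeness theorem, provability). -/
def Proves (T : Set Fml) (φ : Fml) : Prop :=
  ∀ (M : Type) (S : AStr M), ModelsT S T → ∀ v, SatFO S v φ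

/-- Consistency (equivalently, by the completeness theorem, having a model). -/
def ConsistentT (T : Set Fml) : Prop :=
  ∃ (M : Type) (S : AStr M), ModelsT S T

def IsFOSentence (φ : Fml) : Prop := φ.IsFO ∧ φ.freeN = ∅

/-- Completeness of a theory. -/
def CompleteT (T : Set Fml) : Prop :=
  ∀ φ, IsFOSentence φ → (Proves T φ ∨ Proves T φ.not)

/-! ### Peano arithmetic -/

def numeral : ℕ → PTerm
  | 0 => .zero
  | n + 1 => .add (numeral n) .one

def univClosure (φ : Fml) : Fml := (φ.freeN.sort (· ≤ ·)).foldr Fml.all φ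

/-- The induction axiom for `φ` in the variable `x` (before taking universal closure). -/
def indFml (φ : Fml) (x : ℕ) : Fml :=
  .imp ((φ.substN x .zero).and (.all x (.imp φ (φ.substN x (.add (.var x) .one)))))
    (.all x φ)

/-- The axioms of first-order Peano arithmetic `PA`. -/
def PAax : Set Fml :=
  {Fml.all 0 (.not (.eq (.add (.var 0) .one) .zero)),
   Fml.all 0 (.all 1 (.imp (.eq (.add (.var 0) .one) (.add (.var 1) .one))
     (.eq (.var 0) (.var 1)))),
   Fml.all 0 (.eq (.add (.var 0) .zero) (.var 0)),
   Fml.all 0 (.all 1 (.eq (.add (.var 0) (.add (.var 1) .one))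
     (.add (.add (.var 0) (.var 1)) .one))),
   Fml.all 0 (.eq (.mul (.var 0) .zero) .zero),
   Fml.all 0 (.all 1 (.eq (.mul (.var 0) (.add (.var 1) .one))
     (.add (.mul (.var 0) (.var 1)) (.var 0)))),
   Fml.all 0 (.all 1 (Fml.iff (.lt (.var 0) (.var 1))
     (Fml.ex 2 (.eq (.add (.var 0) (.add (.var 2) .one)) (.var 1)))))} ∪
  {ψ | ∃ φ x, Fml.IsFO φ ∧ ψ = univClosure (indFml φ x)}

/-! ### Gödel coding -/

/-- The Cantor pairing function (the canonical pairing `⟨·,·⟩`). -/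
def cpair (a b : ℕ) : ℕ := (a + b) * (a + b + 1) / 2 + a

def PTerm.code : PTerm → ℕ
  | .var n => cpair 0 n
  | .zero => cpair 1 0
  | .one => cpair 2 0
  | .add t u => cpair 3 (cpair t.code u.code)
  | .mul t u => cpair 4 (cpair t.code u.code)

def Fml.code : Fml → ℕ
  | .eq t u => cpair 5 (cpair t.code u.code)
  | .lt t u => cpair 6 (cpair t.code u.code)
  | .not φ => cpair 7 φ.code
  | .imp φ ψ => cpair 8 (cpair φ.code ψ.code)
  | .all x φ => cpair 9 (cpair x φ.code)
  | .mem t k => cpair 10 (cpair t.code k)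
  | .allS k φ => cpair 11 (cpair k φ.code)

/-- A theory identified with its set of Gödel codes. -/
def theoryCode (T : Set Fml) : Set ℕ := Fml.code '' T

/-! ### The arithmetical hierarchy (syntactic classes) -/

inductive IsDelta0 : Fml → Prop
  | eq (t u) : IsDelta0 (.eq t u)
  | lt (t u) : IsDelta0 (.lt t u)
  | mem (t k) : IsDelta0 (.mem t k)
  | not {φ} : IsDelta0 φ → IsDelta0 φ.not
  | imp {φ ψ} : IsDelta0 φ → IsDelta0 ψ → IsDelta0 (φ.imp ψ)
  | ball {φ} (x t) : x ∉ PTerm.vars t → IsDelta0 φ →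
      IsDelta0 (.all x (.imp (.lt (.var x) t) φ))

def IsSigma01 (φ : Fml) : Prop := ∃ x ψ, IsDelta0 ψ ∧ φ = Fml.ex x ψ

def IsPi01 (φ : Fml) : Prop := ∃ x ψ, IsDelta0 ψ ∧ φ = Fml.all x ψ

/-! ### Subsystems of second-order arithmetic, semantically -/

/-- The basic axioms (`PA⁻`, a discretely ordered commutative semiring). -/
def PAminusSem {M : Type} (S : AStr M) : Prop :=
  (∀ a b c : M, S.add a (S.add b c) = S.add (S.add a b) c) ∧
  (∀ a b : M, S.add a b = S.add b a) ∧
  (∀ a b c : M, S.mul a (S.mul b c) = S.mul (S.mul a b) c) ∧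
  (∀ a b : M, S.mul a b = S.mul b a) ∧
  (∀ a b c : M, S.mul a (S.add b c) = S.add (S.mul a b) (S.mul a c)) ∧
  (∀ a : M, S.add a S.zero = a) ∧
  (∀ a : M, S.mul a S.zero = S.zero) ∧
  (∀ a : M, S.mul a S.one = a) ∧
  (∀ a b c : M, S.lt a b → S.lt b c → S.lt a c) ∧
  (∀ a : M, ¬ S.lt a a) ∧
  (∀ a b : M, S.lt a b ∨ a = b ∨ S.lt b a) ∧
  (∀ a b c : M, S.lt a b → S.lt (S.add a c) (S.add b c)) ∧
  (∀ a b c : M, S.lt S.zero c → S.lt a b → S.lt (S.mul a c) (S.mul b c)) ∧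
  (∀ a b : M, S.lt a b → ∃ c : M, S.add a c = b) ∧
  S.lt S.zero S.one ∧
  (∀ a : M, S.lt S.zero a → a = S.one ∨ S.lt S.one a) ∧
  (∀ a : M, a = S.zero ∨ S.lt S.zero a)

/-- `(M,𝔛)` satisfies the induction axiom for `φ` in the variable `x`
(with arbitrary number and set parameters). -/
def SatInd {M : Type} (S : AStr M) (𝔛 : Set (Set M)) (φ : Fml) (x : ℕ) : Prop :=
  ∀ (v : ℕ → M) (w : ℕ → Set M), (∀ k, w k ∈ 𝔛) →
    (Sat S 𝔛 (Function.update v x S.zero) w φ ∧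
      ∀ a, Sat S 𝔛 (Function.update v x a) w φ →
        Sat S 𝔛 (Function.update v x (S.add a S.one)) w φ) →
    ∀ a, Sat S 𝔛 (Function.update v x a) w φ

/-- `(M,𝔛) ⊨ RCA₀`: basic axioms, `Σ⁰₁` induction and `Δ⁰₁` comprehension. -/
def SatRCA0 {M : Type} (S : AStr M) (𝔛 : Set (Set M)) : Prop :=
  PAminusSem S ∧
  (∀ φ x, IsSigma01 φ → SatInd S 𝔛 φ x) ∧
  (∀ φ ψ x, IsSigma01 φ → IsPi01 ψ →
    ∀ (v : ℕ → M) (w : ℕ → Set M), (∀ k, w k ∈ 𝔛) →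
      (∀ a, Sat S 𝔛 (Function.update v x a) w φ ↔ Sat S 𝔛 (Function.update v x a) w ψ) →
      {a : M | Sat S 𝔛 (Function.update v x a) w φ} ∈ 𝔛)

/-- `(M,𝔛) ⊨ ACA₀`: basic axioms, the induction axiom and arithmetical comprehension. -/
def SatACA0 {M : Type} (S : AStr M) (𝔛 : Set (Set M)) : Prop :=
  PAminusSem S ∧
  (∀ X ∈ 𝔛, S.zero ∈ X → (∀ a, a ∈ X → S.add a S.one ∈ X) → ∀ a, a ∈ X) ∧
  (∀ φ x, Fml.IsArith φ → ∀ (v : ℕ → M) (w : ℕ → Set M), (∀ k, w k ∈ 𝔛) →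
    {a : M | Sat S 𝔛 (Function.update v x a) w φ} ∈ 𝔛)

/-! ### Arithmetization inside a model

All notions below unfold the standard (`Δ₀`/`Σ₁`) arithmetized definitions at the
meta-level, using the operations of a structure `S : AStr M`.  On models of `IΣ₁`
they agree with satisfaction of the corresponding arithmetic formulas. -/

namespace AStr

variable {M : Type} (S : AStr M)

/-- Interpretation of numerals. -/
def num : ℕ → M
  | 0 => S.zero
  | n + 1 => S.add (num n) S.one

def le (a b : M) : Prop := S.lt a b ∨ a = b

def two : M := S.add S.one S.one

/-- `p = ⟨a,b⟩` for the Cantor pairing function: `2p = (a+b)(a+b+1) + 2a`. -/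
def PairRel (p a b : M) : Prop :=
  S.mul S.two p = S.add (S.mul (S.add a b) (S.add (S.add a b) S.one)) (S.mul S.two a)

/-- `r = a mod m`. -/
def ModRel (a m r : M) : Prop := S.lt r m ∧ ∃ q, a = S.add (S.mul q m) r

/-- Gödel's β-function: `x = β(c, i)` where `c = ⟨a,b⟩` and `x = a mod (1 + (i+1)b)`. -/
def BetaRel (c i x : M) : Prop :=
  ∃ a b, S.PairRel c a b ∧ S.ModRel a (S.add S.one (S.mul (S.add i S.one) b)) x

/-- `s` codes a sequence of length `l` (as `s = ⟨c, l⟩`). -/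
def SeqLen (s l : M) : Prop := ∃ c, S.PairRel s c l

/-- The `i`-th entry of the sequence coded by `s` is `x`. -/
def SeqAt (s i x : M) : Prop := ∃ c l, S.PairRel s c l ∧ S.lt i l ∧ S.BetaRel c i x

/-- The fixed `Δ₀` coding formula `x ∈ y` for (bounded) sets:
`y = ⟨a,b⟩` and `a mod (1 + (x+1)b) = 1` with modulus `> 1`, and `x < y`. -/
def MemRel (x y : M) : Prop :=
  S.lt x y ∧ ∃ a b, S.PairRel y a b ∧
    S.lt S.one (S.add S.one (S.mul (S.add x S.one) b)) ∧
    S.ModRel a (S.add S.one (S.mul (S.add x S.one) b)) S.one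

/-- Tagged pairs, used for codes of syntax: `x = ⟨tag, payload⟩`. -/
def Node (x tag payload : M) : Prop := S.PairRel x tag payload

/-- `x` is the code of the variable `v`. -/
def VarC (v x : M) : Prop := S.Node x (S.num 0) v

def AddC (t u y : M) : Prop := ∃ p, S.PairRel p t u ∧ S.Node y (S.num 3) p
def MulC (t u y : M) : Prop := ∃ p, S.PairRel p t u ∧ S.Node y (S.num 4) p
def EqC (t u y : M) : Prop := ∃ p, S.PairRel p t u ∧ S.Node y (S.num 5) p
def LtC (t u y : M) : Prop := ∃ p, S.PairRel p t u ∧ S.Node y (S.num 6) p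
def NotC (x y : M) : Prop := S.Node y (S.num 7) x
def ImpC (x y z : M) : Prop := ∃ p, S.PairRel p x y ∧ S.Node z (S.num 8) p
def AllC (v x y : M) : Prop := ∃ p, S.PairRel p v x ∧ S.Node y (S.num 9) p

/-- `s` codes a construction sequence for terms. -/
def IsTermConSeq (s : M) : Prop :=
  ∀ i x, S.SeqAt s i x →
    (∃ v, S.VarC v x) ∨ S.Node x (S.num 1) (S.num 0) ∨ S.Node x (S.num 2) (S.num 0) ∨
    (∃ j k y z, S.lt j i ∧ S.lt k i ∧ S.SeqAt s j y ∧ S.SeqAt s k z ∧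
      (S.AddC y z x ∨ S.MulC y z x))

/-- `x` is a term code (in the sense of `M`, possibly nonstandard). -/
def TermCodeM (x : M) : Prop := ∃ s i, S.IsTermConSeq s ∧ S.SeqAt s i x

/-- `s` codes a construction sequence for (first-order) formulas. -/
def IsFmlConSeq (s : M) : Prop :=
  ∀ i x, S.SeqAt s i x →
    (∃ t u, S.TermCodeM t ∧ S.TermCodeM u ∧ (S.EqC t u x ∨ S.LtC t u x)) ∨
    (∃ j y, S.lt j i ∧ S.SeqAt s j y ∧ S.NotC y x) ∨
    (∃ j k y z, S.lt j i ∧ S.lt k i ∧ S.SeqAt s j y ∧ S.SeqAt s k z ∧ S.ImpC y z x) ∨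
    (∃ j v y, S.lt j i ∧ S.SeqAt s j y ∧ S.AllC v y x)

/-- `x` is a formula code (in the sense of `M`, possibly nonstandard). -/
def FmlCodeM (x : M) : Prop := ∃ s i, S.IsFmlConSeq s ∧ S.SeqAt s i x

/-- Construction sequences of pairs (term code, occurrence flag for the variable `v`). -/
def IsOccConSeq (v s : M) : Prop :=
  ∀ i p, S.SeqAt s i p → ∃ x f, S.PairRel p x f ∧
    ((S.VarC v x ∧ f = S.num 1) ∨
     (∃ u, S.VarC u x ∧ u ≠ v ∧ f = S.num 0) ∨
     ((S.Node x (S.num 1) (S.num 0) ∨ S.Node x (S.num 2) (S.num 0)) ∧ f = S.num 0) ∨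
     (∃ j k y z g h pj pk, S.lt j i ∧ S.lt k i ∧ S.SeqAt s j pj ∧ S.SeqAt s k pk ∧
       S.PairRel pj y g ∧ S.PairRel pk z h ∧ (S.AddC y z x ∨ S.MulC y z x) ∧
       ((f = S.num 1 ∧ (g = S.num 1 ∨ h = S.num 1)) ∨
        (f = S.num 0 ∧ g = S.num 0 ∧ h = S.num 0))))

/-- `f = 1` iff the variable `v` occurs in the term coded by `t` (`f ∈ {0,1}`). -/
def OccT (v t f : M) : Prop :=
  ∃ s i p, S.IsOccConSeq v s ∧ S.SeqAt s i p ∧ S.PairRel p t f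

/-- Construction sequences of pairs (formula code, freeness flag for the variable `v`). -/
def IsFreeConSeq (v s : M) : Prop :=
  ∀ i p, S.SeqAt s i p → ∃ x f, S.PairRel p x f ∧
    ((∃ t u, (S.EqC t u x ∨ S.LtC t u x) ∧
       ((f = S.num 1 ∧ (S.OccT v t (S.num 1) ∨ S.OccT v u (S.num 1))) ∨
        (f = S.num 0 ∧ S.OccT v t (S.num 0) ∧ S.OccT v u (S.num 0)))) ∨
     (∃ j y g pj, S.lt j i ∧ S.SeqAt s j pj ∧ S.PairRel pj y g ∧ S.NotC y x ∧ f = g) ∨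
     (∃ j k y z g h pj pk, S.lt j i ∧ S.lt k i ∧ S.SeqAt s j pj ∧ S.SeqAt s k pk ∧
       S.PairRel pj y g ∧ S.PairRel pk z h ∧ S.ImpC y z x ∧
       ((f = S.num 1 ∧ (g = S.num 1 ∨ h = S.num 1)) ∨
        (f = S.num 0 ∧ g = S.num 0 ∧ h = S.num 0))) ∨
     (∃ j w y g pj, S.lt j i ∧ S.SeqAt s j pj ∧ S.PairRel pj y g ∧ S.AllC w y x ∧
       ((w = v ∧ f = S.num 0) ∨ (w ≠ v ∧ f = g))))

/-- `f = 1` iff the variable `v` is free in the formula coded by `φ`. -/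
def FreeF (v φ f : M) : Prop :=
  ∃ s i p, S.IsFreeConSeq v s ∧ S.SeqAt s i p ∧ S.PairRel p φ f

/-- Construction sequences of pairs (term code, result of substituting `t` for `v`). -/
def IsSubTConSeq (v t s : M) : Prop :=
  ∀ i p, S.SeqAt s i p → ∃ x x', S.PairRel p x x' ∧
    ((S.VarC v x ∧ x' = t) ∨
     (∃ u, S.VarC u x ∧ u ≠ v ∧ x' = x) ∨
     ((S.Node x (S.num 1) (S.num 0) ∨ S.Node x (S.num 2) (S.num 0)) ∧ x' = x) ∨
     (∃ j k y z y' z' pj pk, S.lt j i ∧ S.lt k i ∧ S.SeqAt s j pj ∧ S.SeqAt s k pk ∧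
       S.PairRel pj y y' ∧ S.PairRel pk z z' ∧
       ((S.AddC y z x ∧ S.AddC y' z' x') ∨ (S.MulC y z x ∧ S.MulC y' z' x'))))

/-- Substitution of the term (code) `t` for the variable `v` in terms: `x' = x[t/v]`. -/
def SubT (v t x x' : M) : Prop :=
  ∃ s i p, S.IsSubTConSeq v t s ∧ S.SeqAt s i p ∧ S.PairRel p x x'

/-- Construction sequences for capture-free substitution in formulas. -/
def IsSubFConSeq (v t s : M) : Prop :=
  ∀ i p, S.SeqAt s i p → ∃ x x', S.PairRel p x x' ∧
    ((∃ a b a' b', S.SubT v t a a' ∧ S.SubT v t b b' ∧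
       ((S.EqC a b x ∧ S.EqC a' b' x') ∨ (S.LtC a b x ∧ S.LtC a' b' x'))) ∨
     (∃ j y y' pj, S.lt j i ∧ S.SeqAt s j pj ∧ S.PairRel pj y y' ∧
       S.NotC y x ∧ S.NotC y' x') ∨
     (∃ j k y z y' z' pj pk, S.lt j i ∧ S.lt k i ∧ S.SeqAt s j pj ∧ S.SeqAt s k pk ∧
       S.PairRel pj y y' ∧ S.PairRel pk z z' ∧ S.ImpC y z x ∧ S.ImpC y' z' x') ∨
     (∃ w y, S.AllC w y x ∧
       ((w = v ∧ x' = x) ∨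
        (w ≠ v ∧ (S.OccT w t (S.num 0) ∨ S.FreeF v y (S.num 0)) ∧
          ∃ j y' pj, S.lt j i ∧ S.SeqAt s j pj ∧ S.PairRel pj y y' ∧ S.AllC w y' x'))))

/-- Capture-free substitution in formulas: `x' = x[t/v]`, with `t` substitutable for `v`. -/
def SubF (v t x x' : M) : Prop :=
  ∃ s i p, S.IsSubFConSeq v t s ∧ S.SeqAt s i p ∧ S.PairRel p x x'

/-- `x` is (the code of) a generalization `∀v₁ ⋯ ∀vₖ y` of `y`. -/
def GenOf (y x : M) : Prop :=
  ∃ s i, S.SeqAt s (S.num 0) y ∧ S.SeqAt s i x ∧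
    ∀ j z z', S.SeqAt s j z → S.SeqAt s (S.add j S.one) z' → S.le (S.add j S.one) i →
      ∃ v, S.AllC v z z'

/-- Codes of instances of the logical axiom schemes (a Hilbert-style calculus with
modus ponens as the only rule; axioms are taken together with their generalizations). -/
def LogAxCore (x : M) : Prop :=
  -- A1 : a → (b → a)
  (∃ a b y, S.FmlCodeM a ∧ S.FmlCodeM b ∧ S.ImpC b a y ∧ S.ImpC a y x) ∨
  -- A2 : (a → (b → c)) → ((a → b) → (a → c))
  (∃ a b c bc abc ab ac r, S.FmlCodeM a ∧ S.FmlCodeM b ∧ S.FmlCodeM c ∧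
    S.ImpC b c bc ∧ S.ImpC a bc abc ∧ S.ImpC a b ab ∧ S.ImpC a c ac ∧
    S.ImpC ab ac r ∧ S.ImpC abc r x) ∨
  -- A3 : (¬b → ¬a) → (a → b)
  (∃ a b na nb l r, S.FmlCodeM a ∧ S.FmlCodeM b ∧ S.NotC a na ∧ S.NotC b nb ∧
    S.ImpC nb na l ∧ S.ImpC a b r ∧ S.ImpC l r x) ∨
  -- A4 : ∀v a → a[t/v]
  (∃ v t a a' al, S.TermCodeM t ∧ S.FmlCodeM a ∧ S.AllC v a al ∧ S.SubF v t a a' ∧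
    S.ImpC al a' x) ∨
  -- A5 : ∀v (a → b) → (∀v a → ∀v b)
  (∃ v a b ab alab ala alb r, S.FmlCodeM a ∧ S.FmlCodeM b ∧ S.ImpC a b ab ∧
    S.AllC v ab alab ∧ S.AllC v a ala ∧ S.AllC v b alb ∧ S.ImpC ala alb r ∧
    S.ImpC alab r x) ∨
  -- A6 : a → ∀v a, for v not free in a
  (∃ v a ala, S.FmlCodeM a ∧ S.FreeF v a (S.num 0) ∧ S.AllC v a ala ∧ S.ImpC a ala x) ∨
  -- E1 : t = t
  (∃ t, S.TermCodeM t ∧ S.EqC t t x) ∨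
  -- E2 : u = w → w = u (variables)
  (∃ u w vu vw e1 e2, S.VarC u vu ∧ S.VarC w vw ∧ S.EqC vu vw e1 ∧ S.EqC vw vu e2 ∧
    S.ImpC e1 e2 x) ∨
  -- E3 : u = w → (w = z → u = z) (variables)
  (∃ u w z vu vw vz e1 e2 e3 r, S.VarC u vu ∧ S.VarC w vw ∧ S.VarC z vz ∧
    S.EqC vu vw e1 ∧ S.EqC vw vz e2 ∧ S.EqC vu vz e3 ∧ S.ImpC e2 e3 r ∧ S.ImpC e1 r x) ∨
  -- E4 : congruence of +, ·, < with respect to = (variables)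
  (∃ u1 w1 u2 w2 a1 b1 a2 b2 e1 e2 s1 s2 es r,
    S.VarC u1 a1 ∧ S.VarC w1 b1 ∧ S.VarC u2 a2 ∧ S.VarC w2 b2 ∧
    S.EqC a1 b1 e1 ∧ S.EqC a2 b2 e2 ∧
    ((S.AddC a1 a2 s1 ∧ S.AddC b1 b2 s2 ∧ S.EqC s1 s2 es) ∨
     (S.MulC a1 a2 s1 ∧ S.MulC b1 b2 s2 ∧ S.EqC s1 s2 es) ∨
     (S.LtC a1 a2 s1 ∧ S.LtC b1 b2 s2 ∧ S.ImpC s1 s2 es)) ∧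
    S.ImpC e2 es r ∧ S.ImpC e1 r x) ∨
  -- E5 : congruence of = (variables)
  (∃ u1 w1 u2 w2 a1 b1 a2 b2 e1 e2 d1 d2 inner r,
    S.VarC u1 a1 ∧ S.VarC w1 b1 ∧ S.VarC u2 a2 ∧ S.VarC w2 b2 ∧
    S.EqC a1 b1 e1 ∧ S.EqC a2 b2 e2 ∧ S.EqC a1 a2 d1 ∧ S.EqC b1 b2 d2 ∧
    S.ImpC d1 d2 inner ∧ S.ImpC e2 inner r ∧ S.ImpC e1 r x)

/-- Logical axioms: generalizations of instances of the axiom schemes. -/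
def LogAx (x : M) : Prop := ∃ y, S.LogAxCore y ∧ S.GenOf y x

/-- `s` codes a proof of `φ` from the set `Γ ⊆ M` of (codes of) sentences:
every entry is a logical axiom, a member of `Γ`, or follows by modus ponens. -/
def ProofFrom (Γ : Set M) (s φ : M) : Prop :=
  (∃ i, S.SeqAt s i φ) ∧
  ∀ i x, S.SeqAt s i x →
    S.LogAx x ∨ x ∈ Γ ∨
    (∃ j k y z, S.lt j i ∧ S.lt k i ∧ S.SeqAt s j y ∧ S.SeqAt s k z ∧ S.ImpC y x z)

/-- Provability (in the sense of `M`) from the axiom set `Γ ⊆ M`. -/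
def ProvFrom (Γ : Set M) (φ : M) : Prop := ∃ s, S.ProofFrom Γ s φ

/-- `M ⊨ Con_Γ` : there is no (possibly nonstandard) proof of a contradiction from `Γ`. -/
def ConOf (Γ : Set M) : Prop :=
  ¬ ∃ φ nφ, S.NotC φ nφ ∧ S.ProvFrom Γ φ ∧ S.ProvFrom Γ nφ

/-- `M ⊨ Con_T` for a (standard) theory `T`: `M` thinks every finite subtheory
of `T` is consistent. -/
def SatConTheory (T : Set Fml) : Prop :=
  ∀ F : Finset Fml, ↑F ⊆ T → S.ConOf {x : M | ∃ φ ∈ F, x = S.num (Fml.code φ)}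

/-! ### Coded sets, standard systems, filters on `P_𝔛` -/

/-- `A` is unbounded in `M`. -/
def Unb (A : Set M) : Prop := ∀ b, ∃ a ∈ A, S.lt b a

/-- `P_𝔛`: the collection of unbounded sets in `𝔛` (a partial order under `⊆`). -/
def PX (𝔛 : Set (Set M)) : Set (Set M) := {A | A ∈ 𝔛 ∧ S.Unb A}

/-- The `a`-th slice `(A)_a = {b | ⟨a,b⟩ ∈ A}`. -/
def SliceAt (A : Set M) (a : M) : Set M := {b | ∃ p, S.PairRel p a b ∧ p ∈ A}

/-- A function `M → M` is coded in `𝔛` if its graph (via the canonical pairing)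
belongs to `𝔛`. -/
def CodedFun (𝔛 : Set (Set M)) (f : M → M) : Prop :=
  ∃ G ∈ 𝔛, ∀ a b, f a = b ↔ b ∈ S.SliceAt G a

/-- A family `F` of sets is definable (over `(M,𝔛)`) if `{a | (A)_a ∈ F} ∈ 𝔛`
for every `A ∈ 𝔛`. -/
def DefinableFam (𝔛 F : Set (Set M)) : Prop :=
  ∀ A ∈ 𝔛, {a : M | S.SliceAt A a ∈ F} ∈ 𝔛

/-- `F` is a complete family: every function coded in `𝔛` with bounded range is
constant on some member of `F`. -/
def CompleteOn (𝔛 F : Set (Set M)) : Prop :=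
  ∀ f : M → M, S.CodedFun 𝔛 f → (∃ b, ∀ a, S.lt (f a) b) →
    ∃ A ∈ F, ∀ x ∈ A, ∀ y ∈ A, f x = f y

/-- The standard system `SSy(M)`: standard parts of the `M`-coded sets. -/
def SSy : Set (Set ℕ) := {A | ∃ c : M, ∀ n : ℕ, (n ∈ A ↔ S.MemRel (S.num n) c)}

/-- `M` is nonstandard. -/
def Nonstd : Prop := ∃ a : M, ∀ n : ℕ, a ≠ S.num n

/-- `M` is recursively saturated: every recursive type (in the variable `0`, with
finitely many parameters assigned to the variables `1, …, k`) that is finitely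
realized in `M` is realized in `M`. -/
def RecSat : Prop :=
  ∀ (p : Set Fml) (k : ℕ) (par : ℕ → M),
    (∀ φ ∈ p, Fml.IsFO φ ∧ φ.freeN ⊆ Finset.range (k + 1)) →
    ComputablePred (fun n => ∃ φ ∈ p, Fml.code φ = n) →
    (∀ F : Finset Fml, ↑F ⊆ p →
      ∃ a : M, ∀ φ ∈ F, SatFO S (fun i => if i = 0 then a else par i) φ) →
    ∃ a : M, ∀ φ ∈ p, SatFO S (fun i => if i = 0 then a else par i) φ

/-- `c` is the least code of the (bounded) set `A`. -/
def IsLeastCode (A : Set M) (c : M) : Prop :=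
  (∀ x, S.MemRel x c ↔ x ∈ A) ∧ ∀ c', (∀ x, S.MemRel x c' ↔ x ∈ A) → S.le c c'

/-- `A* = {⟨A ∩ I_{<a}⟩ | a ∈ M}`, the set of least codes of initial segments of `A`. -/
def star (A : Set M) : Set M :=
  {c | ∃ a, S.IsLeastCode (A ∩ {b | S.lt b a}) c}

end AStr

/-! ### Filters and partial orders of sets -/

/-- A filter on a partial order `P` of sets, ordered by inclusion: a proper, nonempty,
upward closed, downward directed subset of `P`. -/
def IsFilterOn {α : Type} (P F : Set (Set α)) : Prop :=
  F ⊆ P ∧ F.Nonempty ∧ F ≠ P ∧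
  (∀ A ∈ F, ∀ B ∈ P, A ⊆ B → B ∈ F) ∧
  (∀ A ∈ F, ∀ B ∈ F, ∃ C ∈ F, C ⊆ A ∧ C ⊆ B)

/-- An ultrafilter on a partial order of sets: a maximal filter. -/
def IsUltraOn {α : Type} (P U : Set (Set α)) : Prop :=
  IsFilterOn P U ∧ ∀ F, IsFilterOn P F → U ⊆ F → F = U

/-- A principal filter on a partial order of sets. -/
def IsPrincipalOn {α : Type} (P U : Set (Set α)) : Prop :=
  ∃ A ∈ P, U = {B | B ∈ P ∧ A ⊆ B}

/-- The countable chain condition for a partial order `P` of sets (ordered by `⊆`):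
every uncountable subset contains two distinct compatible elements. -/
def CCCOn {α : Type} (P : Set (Set α)) : Prop :=
  ∀ A : Set (Set α), A ⊆ P → ¬A.Countable →
    ∃ X ∈ A, ∃ Y ∈ A, X ≠ Y ∧ ∃ Z ∈ P, Z ⊆ X ∧ Z ⊆ Y

/-- `𝔛` is a Boolean algebra of sets. -/
def IsBoolAlg {α : Type} (𝔛 : Set (Set α)) : Prop :=
  Set.univ ∈ 𝔛 ∧ ∅ ∈ 𝔛 ∧
  (∀ A ∈ 𝔛, ∀ B ∈ 𝔛, A ∪ B ∈ 𝔛) ∧ (∀ A ∈ 𝔛, ∀ B ∈ 𝔛, A ∩ B ∈ 𝔛) ∧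
  (∀ A ∈ 𝔛, Aᶜ ∈ 𝔛)

/-- A filter on the Boolean algebra `𝔛`. -/
def IsBAFilter {α : Type} (𝔛 F : Set (Set α)) : Prop :=
  F ⊆ 𝔛 ∧ F.Nonempty ∧ ∅ ∉ F ∧
  (∀ A ∈ F, ∀ B ∈ 𝔛, A ⊆ B → B ∈ F) ∧
  (∀ A ∈ F, ∀ B ∈ F, A ∩ B ∈ F)

/-- An ultrafilter on the Boolean algebra `𝔛`: a maximal filter. -/
def IsBAUltra {α : Type} (𝔛 F : Set (Set α)) : Prop :=
  IsBAFilter 𝔛 F ∧ ∀ G, IsBAFilter 𝔛 G → F ⊆ G → G = F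

/-! ### Scott sets -/

/-- Oracle partial recursive functions: partial recursive in the oracle `O`. -/
inductive RecursiveIn (O : ℕ →. ℕ) : (ℕ →. ℕ) → Prop
  | oracle : RecursiveIn O O
  | zero : RecursiveIn O (pure 0)
  | succ : RecursiveIn O Nat.succ
  | left : RecursiveIn O ↑fun n : ℕ => n.unpair.1
  | right : RecursiveIn O ↑fun n : ℕ => n.unpair.2
  | pair {f g} : RecursiveIn O f → RecursiveIn O g →
      RecursiveIn O fun n => Nat.pair <$> f n <*> g n
  | comp {f g} : RecursiveIn O f → RecursiveIn O g →
      RecursiveIn O fun n => g n >>= f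
  | prec {f g} : RecursiveIn O f → RecursiveIn O g →
      RecursiveIn O (Nat.unpaired fun a n =>
        n.rec (f a) fun y IH => do let i ← IH; g (Nat.pair a (Nat.pair y i)))
  | rfind {f} : RecursiveIn O f →
      RecursiveIn O fun a => Nat.rfind fun n => (fun m => m = 0) <$> f (Nat.pair a n)

/-- The characteristic function of a set of natural numbers. -/
noncomputable def chi (A : Set ℕ) : ℕ →. ℕ :=
  fun n => Part.some (@ite _ (n ∈ A) (Classical.propDecidable _) 1 0)

/-- Turing reducibility: `B ≤_T A`. -/
def TuringLe (B A : Set ℕ) : Prop := RecursiveIn (chi A) (chi B)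

/-- A set of naturals coding a binary tree (codes of finite binary strings,
closed under initial segments). -/
def IsTreeCode (T : Set ℕ) : Prop :=
  (∀ n ∈ T, ∃ l : List Bool, Encodable.encode l = n) ∧
  (∀ l₁ l₂ : List Bool, l₁ <+: l₂ → Encodable.encode l₂ ∈ T → Encodable.encode l₁ ∈ T)

/-- `B` (as the characteristic function of a branch) is an infinite branch of the
binary tree coded by `T`. -/
def IsBranchThrough (B T : Set ℕ) : Prop :=
  ∀ n : ℕ, ∃ l : List Bool, l.length = n ∧
    (∀ i : Fin l.length, (l.get i = true ↔ (i : ℕ) ∈ B)) ∧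
    Encodable.encode l ∈ T

/-- A Scott set: a nonempty Boolean algebra of subsets of `ω` closed under relative
recursion and containing an infinite branch of every infinite binary tree coded in it. -/
def IsScottSet (𝔛 : Set (Set ℕ)) : Prop :=
  𝔛.Nonempty ∧
  (∀ A ∈ 𝔛, ∀ B ∈ 𝔛, A ∪ B ∈ 𝔛) ∧
  (∀ A ∈ 𝔛, Aᶜ ∈ 𝔛) ∧
  (∀ A ∈ 𝔛, ∀ B : Set ℕ, TuringLe B A → B ∈ 𝔛) ∧
  (∀ T ∈ 𝔛, IsTreeCode T → T.Infinite → ∃ B ∈ 𝔛, IsBranchThrough B T)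

/-- The sets represented in the theory `T`. -/
def repSet (T : Set Fml) : Set (Set ℕ) :=
  {A | ∃ φ : Fml, Fml.IsFO φ ∧ φ.freeN ⊆ {0} ∧
    ∀ n : ℕ, (n ∈ A → Proves T (φ.substN 0 (numeral n))) ∧
      (n ∉ A → Proves T (Fml.not (φ.substN 0 (numeral n))))}

/-- Martin's axiom. -/
def MartinsAxiom : Prop :=
  ∀ (P : Type) (_ : PartialOrder P),
    (∀ A : Set P, ¬A.Countable → ∃ x ∈ A, ∃ y ∈ A, x ≠ y ∧ ∃ z, z ≤ x ∧ z ≤ y) →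
    ∀ 𝒟 : Set (Set P), (∀ D ∈ 𝒟, ∀ x : P, ∃ y ∈ D, y ≤ x) →
      Cardinal.mk 𝒟 < Cardinal.continuum →
      ∃ F : Set P, F.Nonempty ∧ (∀ x ∈ F, ∀ y, x ≤ y → y ∈ F) ∧
        (∀ x ∈ F, ∀ y ∈ F, ∃ z ∈ F, z ≤ x ∧ z ≤ y) ∧
        ∀ D ∈ 𝒟, (F ∩ D).Nonempty

/-! ### Auxiliary material for Statement 12 -/

section Stmt12Aux

variable {M : Type}

namespace PAux

variable {S : AStr M} (h : PAminusSem S)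
include h

lemma addComm : ∀ a b : M, S.add a b = S.add b a := h.2.1
lemma addZero : ∀ a : M, S.add a S.zero = a := h.2.2.2.2.2.1
lemma ltTrans : ∀ a b c : M, S.lt a b → S.lt b c → S.lt a c := h.2.2.2.2.2.2.2.2.1
lemma ltIrrefl : ∀ a : M, ¬ S.lt a a := h.2.2.2.2.2.2.2.2.2.1
lemma trich : ∀ a b : M, S.lt a b ∨ a = b ∨ S.lt b a := h.2.2.2.2.2.2.2.2.2.2.1
lemma addLt : ∀ a b c : M, S.lt a b → S.lt (S.add a c) (S.add b c) := h.2.2.2.2.2.2.2.2.2.2.2.1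
lemma ltExAdd : ∀ a b : M, S.lt a b → ∃ c, S.add a c = b := h.2.2.2.2.2.2.2.2.2.2.2.2.2.1
lemma zeroLtOne : S.lt S.zero S.one := h.2.2.2.2.2.2.2.2.2.2.2.2.2.2.1
lemma oneOrGt : ∀ a : M, S.lt S.zero a → a = S.one ∨ S.lt S.one a := h.2.2.2.2.2.2.2.2.2.2.2.2.2.2.2.1
lemma zeroOrPos : ∀ a : M, a = S.zero ∨ S.lt S.zero a := h.2.2.2.2.2.2.2.2.2.2.2.2.2.2.2.2

lemma ltAsym {a b : M} (hab : S.lt a b) : ¬ S.lt b a :=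
  fun hba => ltIrrefl h a (ltTrans h a b a hab hba)

lemma zeroAdd (a : M) : S.add S.zero a = a := by rw [addComm h]; exact addZero h a

lemma ltSuccSelf (a : M) : S.lt a (S.add a S.one) := by
  have := addLt h S.zero S.one a (zeroLtOne h)
  rwa [zeroAdd h, addComm h S.one a] at this

lemma notLtZero (a : M) : ¬ S.lt a S.zero := by
  intro hlt
  rcases zeroOrPos h a with rfl | hp
  · exact ltIrrefl h _ hlt
  · exact ltIrrefl h _ (ltTrans h _ _ _ hp hlt)

lemma ltAddOfPos {a c : M} (hc : S.lt S.zero c) : S.lt a (S.add a c) := by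
  have := addLt h S.zero c a hc
  rwa [zeroAdd h, addComm h c a] at this

lemma succLeOfLt {a b : M} (hab : S.lt a b) : S.le (S.add a S.one) b := by
  obtain ⟨c, hc⟩ := ltExAdd h a b hab
  rcases zeroOrPos h c with rfl | hpos
  · rw [addZero h] at hc; subst hc; exact absurd hab (ltIrrefl h a)
  rcases oneOrGt h c hpos with rfl | h1c
  · exact Or.inr hc
  · left
    obtain ⟨d, hd⟩ := ltExAdd h S.one c h1c
    have hdpos : S.lt S.zero d := by
      rcases zeroOrPos h d with rfl | hp
      · rw [addZero h] at hd; subst hd; exact absurd h1c (ltIrrefl h _)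
      · exact hp
    have : S.lt (S.add a S.one) (S.add (S.add a S.one) d) := ltAddOfPos h hdpos
    rwa [← h.1, hd, hc] at this

lemma ltOfLeLt {a b c : M} (hab : S.le a b) (hbc : S.lt b c) : S.lt a c := by
  rcases hab with hab | rfl
  · exact ltTrans h _ _ _ hab hbc
  · exact hbc

lemma ltOfLtLe {a b c : M} (hab : S.lt a b) (hbc : S.le b c) : S.lt a c := by
  rcases hbc with hbc | rfl
  · exact ltTrans h _ _ _ hab hbc
  · exact hab

lemma leTrans' {a b c : M} (hab : S.le a b) (hbc : S.le b c) : S.le a c := by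
  rcases hab with hab | rfl
  · exact Or.inl (ltOfLtLe h hab hbc)
  · exact hbc

lemma ltOfSuccLe {a b : M} (hab : S.le (S.add a S.one) b) : S.lt a b :=
  ltOfLtLe h (ltSuccSelf h a) hab

lemma succLtSucc {a b : M} (hab : S.lt a b) : S.lt (S.add a S.one) (S.add b S.one) :=
  addLt h a b S.one hab

lemma ltOfSuccLtSucc {a b : M} (hab : S.lt (S.add a S.one) (S.add b S.one)) : S.lt a b := by
  rcases trich h a b with hlt | rfl | hgt
  · exact hlt
  · exact absurd hab (ltIrrefl h _)
  · exact absurd hab (ltAsym h (succLtSucc h hgt))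

lemma succInj {a b : M} (hab : S.add a S.one = S.add b S.one) : a = b := by
  rcases trich h a b with hlt | rfl | hgt
  · exact absurd (hab ▸ succLtSucc h hlt) (ltIrrefl h _)
  · rfl
  · exact absurd (hab ▸ succLtSucc h hgt) (ltIrrefl h _)

lemma ltSuccIff {a b : M} : S.lt a (S.add b S.one) ↔ S.le a b := by
  constructor
  · intro hab
    rcases succLeOfLt h hab with hlt | heq
    · exact Or.inl (ltOfSuccLtSucc h hlt)
    · exact Or.inr (succInj h heq)
  · intro hab
    exact ltOfLeLt h hab (ltSuccSelf h b)

omit h in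
lemma leRefl (a : M) : S.le a a := Or.inr rfl

lemma exMax (a b : M) : ∃ m : M, S.le a m ∧ S.le b m := by
  rcases trich h a b with hlt | rfl | hgt
  · exact ⟨b, Or.inl hlt, leRefl b⟩
  · exact ⟨a, leRefl a, leRefl a⟩
  · exact ⟨a, leRefl a, Or.inl hgt⟩

lemma notLtOfLe {a b : M} (hab : S.le a b) : ¬ S.lt b a := by
  rcases hab with hab | rfl
  · exact ltAsym h hab
  · exact ltIrrefl h a

lemma leOfNotLt {a b : M} (hab : ¬ S.lt b a) : S.le a b := by
  rcases trich h a b with hlt | rfl | hgt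
  · exact Or.inl hlt
  · exact Or.inr rfl
  · exact absurd hgt hab

/-- An unbounded set has elements above any two bounds. -/
lemma unbAbove2 {A : Set M} (hA : S.Unb A) (b c : M) : ∃ x ∈ A, S.lt b x ∧ S.lt c x := by
  obtain ⟨m, hbm, hcm⟩ := exMax h b c
  obtain ⟨x, hx, hmx⟩ := hA m
  exact ⟨x, hx, ltOfLeLt h hbm hmx, ltOfLeLt h hcm hmx⟩

end PAux

end Stmt12Aux

namespace SatAux

variable {M : Type} {S : AStr M} {𝔛 : Set (Set M)} {v : ℕ → M} {w : ℕ → Set M}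

lemma sat_not {φ : Fml} : Sat S 𝔛 v w (.not φ) ↔ ¬ Sat S 𝔛 v w φ := Iff.rfl
lemma sat_imp {φ ψ : Fml} : Sat S 𝔛 v w (.imp φ ψ) ↔ (Sat S 𝔛 v w φ → Sat S 𝔛 v w ψ) := Iff.rfl
lemma sat_all {x : ℕ} {φ : Fml} :
    Sat S 𝔛 v w (.all x φ) ↔ ∀ a : M, Sat S 𝔛 (Function.update v x a) w φ := Iff.rfl
lemma sat_eq {t u : PTerm} : Sat S 𝔛 v w (.eq t u) ↔ t.val S v = u.val S v := Iff.rfl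
lemma sat_lt {t u : PTerm} : Sat S 𝔛 v w (.lt t u) ↔ S.lt (t.val S v) (u.val S v) := Iff.rfl
lemma sat_mem {t : PTerm} {k : ℕ} : Sat S 𝔛 v w (.mem t k) ↔ t.val S v ∈ w k := Iff.rfl

lemma sat_and {φ ψ : Fml} : Sat S 𝔛 v w (φ.and ψ) ↔ (Sat S 𝔛 v w φ ∧ Sat S 𝔛 v w ψ) := by
  by_cases hφ : Sat S 𝔛 v w φ <;> simp [Fml.and, Sat, hφ]

lemma sat_or {φ ψ : Fml} : Sat S 𝔛 v w (φ.or ψ) ↔ (Sat S 𝔛 v w φ ∨ Sat S 𝔛 v w ψ) := by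
  simp [Fml.or, Sat]; tauto

lemma sat_iff {φ ψ : Fml} : Sat S 𝔛 v w (φ.iff ψ) ↔ (Sat S 𝔛 v w φ ↔ Sat S 𝔛 v w ψ) := by
  by_cases hφ : Sat S 𝔛 v w φ <;> by_cases hψ : Sat S 𝔛 v w ψ <;> simp [Fml.iff, Fml.and, Sat, hφ, hψ]

lemma sat_ex {x : ℕ} {φ : Fml} :
    Sat S 𝔛 v w (Fml.ex x φ) ↔ ∃ a : M, Sat S 𝔛 (Function.update v x a) w φ := by
  simp [Fml.ex, Sat]

end SatAux

section FmlBuilders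

/-- `pairF p a b` expresses `PairRel (v p) (v a) (v b)`. -/
def pairF (p a b : ℕ) : Fml :=
  .eq (.mul (.add .one .one) (.var p))
    (.add (.mul (.add (.var a) (.var b)) (.add (.add (.var a) (.var b)) .one))
      (.mul (.add .one .one) (.var a)))

/-- `sliceF b a k p` expresses `v b ∈ SliceAt (w k) (v a)`, with `p` a fresh variable. -/
def sliceF (b a k p : ℕ) : Fml :=
  Fml.ex p ((pairF p a b).and (.mem (.var p) k))

variable {M : Type} {S : AStr M} {𝔛 : Set (Set M)} {v : ℕ → M} {w : ℕ → Set M}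

open SatAux

lemma isArith_pairF {p a b : ℕ} : (pairF p a b).IsArith := by
  simp [pairF, Fml.IsArith]

lemma isArith_sliceF {b a k p : ℕ} : (sliceF b a k p).IsArith := by
  simp [sliceF, pairF, Fml.ex, Fml.and, Fml.IsArith]

lemma sat_pairF {p a b : ℕ} :
    Sat S 𝔛 v w (pairF p a b) ↔ S.PairRel (v p) (v a) (v b) := by
  simp [pairF, Sat, PTerm.val, AStr.PairRel, AStr.two]

lemma sat_sliceF {b a k p : ℕ} (hpa : p ≠ a) (hpb : p ≠ b) :
    Sat S 𝔛 v w (sliceF b a k p) ↔ v b ∈ S.SliceAt (w k) (v a) := by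
  simp only [sliceF, sat_ex, sat_and, sat_pairF, sat_mem, PTerm.val, AStr.SliceAt,
    Set.mem_setOf_eq, Function.update_apply, if_pos rfl, if_neg (Ne.symm hpa),
    if_neg (Ne.symm hpb)]
  tauto

end FmlBuilders

namespace PAux

open SatAux

variable {M : Type} {S : AStr M} {𝔛 : Set (Set M)}

/-- Comprehension for slices. -/
lemma sliceMem (hACA : SatACA0 S 𝔛) {A : Set M} (hA : A ∈ 𝔛) (a : M) :
    S.SliceAt A a ∈ 𝔛 := by
  have := hACA.2.2 (sliceF 0 1 0 2) 0 isArith_sliceF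
    (Function.update (fun _ => S.zero) 1 a) (fun _ => A) (fun _ => hA)
  convert this using 1
  ext b
  rw [Set.mem_setOf_eq, sat_sliceF (by decide) (by decide)]
  simp [Function.update_apply]

/-- Comprehension for final segments `{x ∈ C | b < x}`. -/
lemma cutMem (hACA : SatACA0 S 𝔛) {C : Set M} (hC : C ∈ 𝔛) (b : M) :
    {x | x ∈ C ∧ S.lt b x} ∈ 𝔛 := by
  have := hACA.2.2 ((Fml.mem (.var 0) 0).and (.lt (.var 1) (.var 0))) 0
    (by simp [Fml.and, Fml.IsArith])
    (Function.update (fun _ => S.zero) 1 b) (fun _ => C) (fun _ => hC)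
  convert this using 1
  ext x
  rw [Set.mem_setOf_eq, Set.mem_setOf_eq, sat_and, sat_mem, sat_lt]
  simp [PTerm.val, Function.update_apply]

/-- The induction axiom. -/
lemma indAx (hACA : SatACA0 S 𝔛) {Z : Set M} (hZ : Z ∈ 𝔛) (h0 : S.zero ∈ Z)
    (hs : ∀ a ∈ Z, S.add a S.one ∈ Z) (a : M) : a ∈ Z := hACA.2.1 Z hZ h0 hs a

/-- The least number principle for sets in `𝔛`. -/
lemma lnp (hPA : PAminusSem S) (hACA : SatACA0 S 𝔛) {Z : Set M} (hZ : Z ∈ 𝔛)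
    {z : M} (hz : z ∈ Z) : ∃ a ∈ Z, ∀ a', S.lt a' a → a' ∉ Z := by
  by_contra hno
  push_neg at hno
  have hN : {a : M | ∀ a', S.le a' a → a' ∉ Z} ∈ 𝔛 := by
    have := hACA.2.2 (Fml.all 1 (.imp ((Fml.lt (.var 1) (.var 0)).or
      (.eq (.var 1) (.var 0))) (.not (.mem (.var 1) 0)))) 0
      (by simp [Fml.or, Fml.IsArith]) (fun _ => S.zero) (fun _ => Z) (fun _ => hZ)
    convert this using 1
    ext a
    rw [Set.mem_setOf_eq, Set.mem_setOf_eq, sat_all]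
    refine forall_congr' fun a' => ?_
    rw [sat_imp, sat_or, sat_lt, sat_eq, sat_not, sat_mem]
    simp [PTerm.val, Function.update_apply, AStr.le]
  have hall : ∀ a, a ∈ {a : M | ∀ a', S.le a' a → a' ∉ Z} := by
    refine indAx hACA hN ?_ ?_
    · intro a' ha'
      rcases ha' with hlt | rfl
      · exact absurd hlt (notLtZero hPA a')
      · intro h0Z
        obtain ⟨a', ha', ha'Z⟩ := hno S.zero h0Z
        exact absurd ha' (notLtZero hPA a')
    · intro a ha
      have hsZ : S.add a S.one ∉ Z := by
        intro hmem
        obtain ⟨a', ha', ha'Z⟩ := hno _ hmem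
        exact ha a' (ltSuccIff hPA |>.mp ha') ha'Z
      intro a' ha'
      rcases ha' with hlt | rfl
      · exact ha a' ((ltSuccIff hPA).mp hlt)
      · exact hsZ
  exact (hall z z (leRefl z)) hz

/-- Two disjoint unbounded sets in `𝔛` (the evens and the odds). -/
lemma disjointUnb (hPA : PAminusSem S) (hACA : SatACA0 S 𝔛) {W₀ : Set M} (hW₀ : W₀ ∈ 𝔛) :
    ∃ E O : Set M, E ∈ 𝔛 ∧ O ∈ 𝔛 ∧ S.Unb E ∧ S.Unb O ∧ ∀ x, ¬(x ∈ E ∧ x ∈ O) := by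
  have posSucc : ∀ b : M, S.lt S.zero (S.add b S.one) := by
    intro b
    rcases zeroOrPos hPA b with rfl | hp
    · exact ltSuccSelf hPA S.zero
    · exact ltTrans hPA _ _ _ hp (ltSuccSelf hPA b)
  refine ⟨{x | ∃ y, S.add y y = x}, {x | ∃ y, S.add (S.add y y) S.one = x}, ?_, ?_, ?_, ?_, ?_⟩
  · have := hACA.2.2 (Fml.ex 1 (.eq (.add (.var 1) (.var 1)) (.var 0))) 0
      (by simp [Fml.ex, Fml.IsArith]) (fun _ => S.zero) (fun _ => W₀) (fun _ => hW₀)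
    convert this using 1
    ext x
    rw [Set.mem_setOf_eq, Set.mem_setOf_eq, sat_ex]
    refine exists_congr fun y => ?_
    rw [sat_eq]
    simp [PTerm.val, Function.update_apply]
  · have := hACA.2.2 (Fml.ex 1 (.eq (.add (.add (.var 1) (.var 1)) .one) (.var 0))) 0
      (by simp [Fml.ex, Fml.IsArith]) (fun _ => S.zero) (fun _ => W₀) (fun _ => hW₀)
    convert this using 1
    ext x
    rw [Set.mem_setOf_eq, Set.mem_setOf_eq, sat_ex]
    refine exists_congr fun y => ?_
    rw [sat_eq]
    simp [PTerm.val, Function.update_apply]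
  · intro b
    refine ⟨S.add (S.add b S.one) (S.add b S.one), ⟨_, rfl⟩, ?_⟩
    exact ltTrans hPA _ _ _ (ltSuccSelf hPA b) (ltAddOfPos hPA (posSucc b))
  · intro b
    refine ⟨S.add (S.add b b) S.one, ⟨_, rfl⟩, ?_⟩
    rcases zeroOrPos hPA b with rfl | hp
    · rw [addZero hPA]
      exact ltSuccSelf hPA S.zero
    · exact ltTrans hPA _ _ _ (ltAddOfPos hPA hp) (ltSuccSelf hPA _)
  · -- disjointness, by induction
    have hD : {a : M | ¬((∃ y, S.add y y = a) ∧ (∃ y, S.add (S.add y y) S.one = a))} ∈ 𝔛 := by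
      have := hACA.2.2 (Fml.not ((Fml.ex 1 (.eq (.add (.var 1) (.var 1)) (.var 0))).and
        (Fml.ex 1 (.eq (.add (.add (.var 1) (.var 1)) .one) (.var 0))))) 0
        (by simp [Fml.ex, Fml.and, Fml.IsArith]) (fun _ => S.zero) (fun _ => W₀) (fun _ => hW₀)
      convert this using 1
      ext a
      rw [Set.mem_setOf_eq, Set.mem_setOf_eq, sat_not, sat_and, sat_ex, sat_ex]
      constructor
      · intro hx h2
        exact hx ⟨(by obtain ⟨y, hy⟩ := h2.1; exact ⟨y, by simpa [Sat, PTerm.val,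
            Function.update_apply] using hy⟩),
          (by obtain ⟨y, hy⟩ := h2.2; exact ⟨y, by simpa [Sat, PTerm.val,
            Function.update_apply] using hy⟩)⟩
      · intro hx h2
        exact hx ⟨(by obtain ⟨y, hy⟩ := h2.1; exact ⟨y, by simpa [Sat, PTerm.val,
            Function.update_apply] using hy⟩),
          (by obtain ⟨y, hy⟩ := h2.2; exact ⟨y, by simpa [Sat, PTerm.val,
            Function.update_apply] using hy⟩)⟩
    have succNeZero : ∀ a : M, S.add a S.one ≠ S.zero := by
      intro a ha
      exact notLtZero hPA a (ha ▸ ltSuccSelf hPA a)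
    have pred : ∀ y : M, S.lt S.zero y → ∃ u, S.add u S.one = y := by
      intro y hy
      have h1 := succLeOfLt hPA hy
      rw [zeroAdd hPA] at h1
      rcases h1 with hlt | heq
      · obtain ⟨c, hc⟩ := ltExAdd hPA _ _ hlt
        exact ⟨c, by rw [addComm hPA c S.one]; exact hc⟩
      · exact ⟨S.zero, by rw [zeroAdd hPA]; exact heq⟩
    have hall : ∀ a : M, ¬((∃ y, S.add y y = a) ∧ (∃ y, S.add (S.add y y) S.one = a)) := by
      refine indAx hACA hD ?_ ?_
      · rintro ⟨_, ⟨y, hy⟩⟩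
        exact succNeZero _ hy
      · rintro a ha ⟨⟨y, hy⟩, ⟨z, hz⟩⟩
        refine ha ⟨⟨z, succInj hPA hz⟩, ?_⟩
        have hy0 : S.lt S.zero y := by
          rcases zeroOrPos hPA y with rfl | hp
          · rw [addZero hPA] at hy
            exact absurd hy.symm (succNeZero a)
          · exact hp
        obtain ⟨u, hu⟩ := pred y hy0
        have e2 : S.add (S.add u S.one) (S.add u S.one)
            = S.add (S.add (S.add u S.one) u) S.one := hPA.1 _ u S.one
        have e3 : S.add (S.add u S.one) u = S.add u (S.add u S.one) := addComm hPA _ _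
        have e4 : S.add u (S.add u S.one) = S.add (S.add u u) S.one := hPA.1 u u S.one
        have key : S.add (S.add (S.add u u) S.one) S.one = S.add y y := by
          rw [← hu]
          exact (e2.trans (by rw [e3, e4])).symm
        exact ⟨u, succInj hPA (key.trans hy)⟩
    exact fun x hx => hall x ⟨hx.1, hx.2⟩
  
end PAux

namespace PAux

variable {M : Type} {S : AStr M} {𝔛 U : Set (Set M)}

lemma memPX_of_memU (hUltra : IsUltraOn (S.PX 𝔛) U) {C : Set M} (hC : C ∈ U) :
    C ∈ 𝔛 ∧ S.Unb C := hUltra.1.1 hC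

/-- Final segments of members of `P_𝔛` are in `P_𝔛`. -/
lemma cutPX (hPA : PAminusSem S) (hACA : SatACA0 S 𝔛) {C : Set M}
    (hC : C ∈ S.PX 𝔛) (b : M) : {x | x ∈ C ∧ S.lt b x} ∈ S.PX 𝔛 := by
  refine ⟨cutMem hACA hC.1 b, fun d => ?_⟩
  obtain ⟨x, hx, hdx, hbx⟩ := unbAbove2 hPA hC.2 d b
  exact ⟨x, ⟨hx, hbx⟩, hdx⟩

/-- A generic-free fact: `U` is closed under removing bounded initial segments. -/
lemma cutU (hPA : PAminusSem S) (hACA : SatACA0 S 𝔛)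
    (hUltra : IsUltraOn (S.PX 𝔛) U) {C : Set M} (hC : C ∈ U) (b : M) :
    {x | x ∈ C ∧ S.lt b x} ∈ U := by
  obtain ⟨⟨hUP, hUne, hUneq, hUp, hDir⟩, hMax⟩ := hUltra
  set F : Set (Set M) := {B | B ∈ S.PX 𝔛 ∧ ∃ C ∈ U, ∃ b, ∀ x, x ∈ C → S.lt b x → x ∈ B}
    with hFdef
  have hUF : U ⊆ F := fun B hB => ⟨hUP hB, B, hB, S.zero, fun x hx _ => hx⟩
  have hCPX := hUP hC
  have hFfil : IsFilterOn (S.PX 𝔛) F := by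
    refine ⟨fun B hB => hB.1, ⟨C, hUF hC⟩, ?_, ?_, ?_⟩
    · -- proper
      obtain ⟨C₀, hC₀⟩ := hUne
      obtain ⟨E, O, hE𝔛, hO𝔛, hEu, hOu, hdisj⟩ := disjointUnb hPA hACA (hUP hC₀).1
      intro hFeq
      have hEPX : E ∈ S.PX 𝔛 := ⟨hE𝔛, hEu⟩
      have hOPX : O ∈ S.PX 𝔛 := ⟨hO𝔛, hOu⟩
      obtain ⟨-, C₁, hC₁U, b₁, hb₁⟩ : E ∈ F := hFeq ▸ hEPX
      obtain ⟨-, C₂, hC₂U, b₂, hb₂⟩ : O ∈ F := hFeq ▸ hOPX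
      obtain ⟨D, hDU, hD₁, hD₂⟩ := hDir C₁ hC₁U C₂ hC₂U
      obtain ⟨x, hxD, hx₁, hx₂⟩ := unbAbove2 hPA (hUP hDU).2 b₁ b₂
      exact hdisj x ⟨hb₁ x (hD₁ hxD) hx₁, hb₂ x (hD₂ hxD) hx₂⟩
    · rintro B ⟨hBPX, C', hC'U, b', hb'⟩ B' hB'PX hBB'
      exact ⟨hB'PX, C', hC'U, b', fun x hx hbx => hBB' (hb' x hx hbx)⟩
    · rintro B₁ ⟨hB₁PX, C₁, hC₁U, b₁, hb₁⟩ B₂ ⟨hB₂PX, C₂, hC₂U, b₂, hb₂⟩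
      obtain ⟨D, hDU, hD₁, hD₂⟩ := hDir C₁ hC₁U C₂ hC₂U
      obtain ⟨m, hm₁, hm₂⟩ := exMax hPA b₁ b₂
      refine ⟨{x | x ∈ D ∧ S.lt m x}, ⟨cutPX hPA hACA (hUP hDU) m,
        D, hDU, m, fun x hx hmx => ⟨hx, hmx⟩⟩, ?_, ?_⟩
      · rintro x ⟨hxD, hmx⟩
        exact hb₁ x (hD₁ hxD) (ltOfLeLt hPA hm₁ hmx)
      · rintro x ⟨hxD, hmx⟩
        exact hb₂ x (hD₂ hxD) (ltOfLeLt hPA hm₂ hmx)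
  have hFU : F = U := hMax F hFfil hUF
  rw [← hFU]
  exact ⟨cutPX hPA hACA hCPX b, C, hC, b, fun x hx hbx => ⟨hx, hbx⟩⟩

/-- If `Z ∈ P_𝔛` almost contains a member of `U`, then `Z ∈ U`. -/
lemma almostSupsetU (hPA : PAminusSem S) (hACA : SatACA0 S 𝔛)
    (hUltra : IsUltraOn (S.PX 𝔛) U) {Z C : Set M} (hZ : Z ∈ S.PX 𝔛) (hC : C ∈ U)
    {b : M} (hb : ∀ x, x ∈ C → S.lt b x → x ∈ Z) : Z ∈ U := by
  have hcut := cutU hPA hACA hUltra hC b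
  exact hUltra.1.2.2.2.1 _ hcut Z hZ (fun x hx => hb x hx.1 hx.2)

/-- Any two members of `U` have unbounded intersection. -/
lemma interUnbU (hPA : PAminusSem S) (hUltra : IsUltraOn (S.PX 𝔛) U)
    {Z C : Set M} (hZ : Z ∈ U) (hC : C ∈ U) (b : M) :
    ∃ x, x ∈ Z ∧ x ∈ C ∧ S.lt b x := by
  obtain ⟨D, hDU, hD₁, hD₂⟩ := hUltra.1.2.2.2.2 Z hZ C hC
  obtain ⟨x, hxD, hbx⟩ := (hUltra.1.1 hDU).2 b
  exact ⟨x, hD₁ hxD, hD₂ hxD, hbx⟩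

end PAux

namespace PAux

open SatAux

variable {M : Type} {S : AStr M} {𝔛 U : Set (Set M)}

/-- The formula expressing "`f` (with graph in set slot 1) is constant on set slot 0". -/
def constFml : Fml :=
  .all 0 (.all 1 ((Fml.mem (.var 0) 0).imp ((Fml.mem (.var 1) 0).imp
    (.all 2 (.all 3 ((sliceF 2 0 1 4).imp ((sliceF 3 1 1 4).imp
      (.eq (.var 2) (.var 3)))))))))

lemma sat_constFml {X G : Set M} {v : ℕ → M} {w : ℕ → Set M}
    (hw0 : w 0 = X) (hw1 : w 1 = G) :
    Sat S 𝔛 v w constFml ↔ ∀ x y, x ∈ X → y ∈ X →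
      ∀ u u', u ∈ S.SliceAt G x → u' ∈ S.SliceAt G y → u = u' := by
  subst hw0 hw1
  simp only [constFml, sat_all, sat_imp, sat_mem, sat_eq, PTerm.val,
    sat_sliceF (show (4:ℕ) ≠ 0 by decide) (show (4:ℕ) ≠ 2 by decide),
    sat_sliceF (show (4:ℕ) ≠ 1 by decide) (show (4:ℕ) ≠ 3 by decide),
    Function.update_apply]
  simp

/-- Pigeonhole: a coded function bounded on an unbounded set `X ∈ 𝔛` has an
unbounded fiber. -/
lemma pigeon (hPA : PAminusSem S) (hACA : SatACA0 S 𝔛) {X G : Set M}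
    (hX : X ∈ 𝔛) (hXu : S.Unb X) (hG : G ∈ 𝔛) (f : M → M)
    (hGraph : ∀ a b, f a = b ↔ b ∈ S.SliceAt G a) {bnd : M}
    (hbnd : ∀ a, S.lt (f a) bnd) :
    ∃ c, S.Unb {x | x ∈ X ∧ c ∈ S.SliceAt G x} := by
  by_contra hno
  push_neg at hno
  have hb : ∀ c, ∃ b, ∀ x, (x ∈ X ∧ c ∈ S.SliceAt G x) → ¬ S.lt b x := by
    intro c
    have := hno c
    unfold AStr.Unb at this
    push_neg at this
    obtain ⟨b, hb⟩ := this
    exact ⟨b, fun x hx => hb x hx⟩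
  have hT : {c : M | ∃ m, ∀ c', S.lt c' c → ∀ x, x ∈ X → S.lt m x →
      ¬(c' ∈ S.SliceAt G x)} ∈ 𝔛 := by
    have := hACA.2.2 (Fml.ex 1 (.all 2 ((Fml.lt (.var 2) (.var 0)).imp
      (.all 3 ((Fml.mem (.var 3) 0).imp ((Fml.lt (.var 1) (.var 3)).imp
        (.not (sliceF 2 3 1 4)))))))) 0
      (by simp [Fml.ex, sliceF, pairF, Fml.and, Fml.IsArith])
      (fun _ => S.zero) (fun i => if i = 0 then X else G)
      (fun i => by by_cases h : i = 0 <;> simp [h, hX, hG])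
    convert this using 1
    ext c
    simp only [Set.mem_setOf_eq, sat_ex, sat_all, sat_imp, sat_lt, sat_mem, sat_not,
      PTerm.val, sat_sliceF (show (4:ℕ) ≠ 3 by decide) (show (4:ℕ) ≠ 2 by decide),
      Function.update_apply]
    simp
  have hTall : ∀ c, c ∈ {c : M | ∃ m, ∀ c', S.lt c' c → ∀ x, x ∈ X → S.lt m x →
      ¬(c' ∈ S.SliceAt G x)} := by
    refine indAx hACA hT ⟨S.zero, fun c' hc' => absurd hc' (notLtZero hPA c')⟩ ?_
    rintro c ⟨m, hm⟩
    obtain ⟨bc, hbc⟩ := hb c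
    obtain ⟨m', hm'₁, hm'₂⟩ := exMax hPA m bc
    refine ⟨m', fun c' hc' x hx hmx => ?_⟩
    rcases (ltSuccIff hPA).mp hc' with hlt | rfl
    · exact hm c' hlt x hx (ltOfLeLt hPA hm'₁ hmx)
    · intro hmem
      exact hbc x ⟨hx, hmem⟩ (ltOfLeLt hPA hm'₂ hmx)
  obtain ⟨m, hm⟩ := hTall (S.add bnd S.one)
  obtain ⟨x, hxX, hmx⟩ := hXu m
  exact hm (f x) (ltTrans hPA _ _ _ (hbnd x) (ltSuccSelf hPA bnd)) x hxX hmx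
    ((hGraph x (f x)).mp rfl)

/-- The completeness half of Statement 12. -/
lemma completePart (hPA : PAminusSem S) (hACA : SatACA0 S 𝔛)
    (hUltra : IsUltraOn (S.PX 𝔛) U)
    (hGen : ∀ D : Set (Set M), D ⊆ S.PX 𝔛 →
      (∀ X ∈ S.PX 𝔛, ∃ Y ∈ D, Y ⊆ X) →
      (∃ (φ : Fml) (k : ℕ) (v : ℕ → M) (w : ℕ → Set M), (∀ i, w i ∈ 𝔛) ∧
        D = {X | X ∈ S.PX 𝔛 ∧ Sat S 𝔛 v (Function.update w k X) φ}) →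
      (U ∩ D).Nonempty) :
    S.CompleteOn 𝔛 U := by
  rintro f ⟨G, hG, hGraph⟩ ⟨bnd, hbnd⟩
  set v₀ : ℕ → M := fun _ => S.zero with hv₀
  set w₀ : ℕ → Set M := fun _ => G with hw₀
  set D : Set (Set M) := {X | X ∈ S.PX 𝔛 ∧ Sat S 𝔛 v₀ (Function.update w₀ 0 X) constFml}
    with hD
  have hsat : ∀ X : Set M, Sat S 𝔛 v₀ (Function.update w₀ 0 X) constFml ↔
      ∀ x y, x ∈ X → y ∈ X → ∀ u u', u ∈ S.SliceAt G x → u' ∈ S.SliceAt G y → u = u' := by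
    intro X
    exact sat_constFml (by simp [hw₀]) (by simp [hw₀])
  have hdense : ∀ X ∈ S.PX 𝔛, ∃ Y ∈ D, Y ⊆ X := by
    rintro X ⟨hX𝔛, hXu⟩
    obtain ⟨c, hcu⟩ := pigeon hPA hACA hX𝔛 hXu hG f hGraph hbnd
    have hY𝔛 : {x | x ∈ X ∧ c ∈ S.SliceAt G x} ∈ 𝔛 := by
      have := hACA.2.2 ((Fml.mem (.var 0) 0).and (sliceF 1 0 1 2)) 0
        (by simp [Fml.and, sliceF, pairF, Fml.ex, Fml.IsArith])
        (Function.update (fun _ => S.zero) 1 c) (fun i => if i = 0 then X else G)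
        (fun i => by by_cases h : i = 0 <;> simp [h, hX𝔛, hG])
      convert this using 1
      ext x
      simp only [Set.mem_setOf_eq, sat_and, sat_mem, PTerm.val,
        sat_sliceF (show (2:ℕ) ≠ 0 by decide) (show (2:ℕ) ≠ 1 by decide),
        Function.update_apply]
      simp
    refine ⟨{x | x ∈ X ∧ c ∈ S.SliceAt G x}, ⟨⟨hY𝔛, hcu⟩, ?_⟩, fun x hx => hx.1⟩
    rw [hsat]
    rintro x y ⟨-, hxc⟩ ⟨-, hyc⟩ u u' hu hu'
    have hfx : f x = u := (hGraph x u).mpr hu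
    have hfx' : f x = c := (hGraph x c).mpr hxc
    have hfy : f y = u' := (hGraph y u').mpr hu'
    have hfy' : f y = c := (hGraph y c).mpr hyc
    rw [← hfx, hfx', ← hfy, hfy']
  obtain ⟨A, hAU, hAD⟩ := hGen D (fun X hX => hX.1) hdense
    ⟨constFml, 0, v₀, w₀, fun _ => hG, rfl⟩
  refine ⟨A, hAU, fun x hx y hy => ?_⟩
  have := (hsat A).mp hAD.2
  exact this x y hx hy (f x) (f y) ((hGraph x (f x)).mp rfl) ((hGraph y (f y)).mp rfl)

end PAux

namespace PAux

open SatAux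

variable {M : Type} {S : AStr M} {𝔛 : Set (Set M)} {v : ℕ → M} {w : ℕ → Set M}

/-- `EqvP S A y x c`: `y` and `x` have the same trace on the slices of `A` below `c`. -/
def EqvP (S : AStr M) (A : Set M) (y x c : M) : Prop :=
  ∀ d, S.lt d c → (y ∈ S.SliceAt A d ↔ x ∈ S.SliceAt A d)

/-- Formula for `EqvP` (variables `y x c` must be `< 14`; slices of set slot `kA`). -/
def eqvFml (y x c kA : ℕ) : Fml :=
  .all 14 ((Fml.lt (.var 14) (.var c)).imp ((sliceF y 14 kA 15).iff (sliceF x 14 kA 15)))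

lemma isArith_eqvFml {y x c kA : ℕ} : (eqvFml y x c kA).IsArith := by
  simp [eqvFml, sliceF, pairF, Fml.iff, Fml.and, Fml.ex, Fml.IsArith]

lemma sat_eqvFml {y x c kA : ℕ} (hy : y < 14) (hx : x < 14) (hc : c < 14) :
    Sat S 𝔛 v w (eqvFml y x c kA) ↔ EqvP S (w kA) (v y) (v x) (v c) := by
  simp only [eqvFml, sat_all, sat_imp, sat_lt, PTerm.val, sat_iff,
    sat_sliceF (show (15:ℕ) ≠ 14 by decide) (show (15:ℕ) ≠ y by omega),
    sat_sliceF (show (15:ℕ) ≠ 14 by decide) (show (15:ℕ) ≠ x by omega),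
    Function.update_apply, EqvP]
  simp only [if_pos rfl, if_neg (show y ≠ 14 by omega), if_neg (show x ≠ 14 by omega),
    if_neg (show c ≠ 14 by omega)]
  simp

/-- `HP S A X x a`: `x` is hereditarily greedy below `a` (relative to `X` and the
slices of `A`). -/
def HP (S : AStr M) (A X : Set M) (x a : M) : Prop :=
  ∀ c, S.lt c a → (x ∈ S.SliceAt A c ↔
    ∀ d, ∃ y, y ∈ X ∧ (S.lt d y ∧ (EqvP S A y x c ∧ y ∈ S.SliceAt A c)))

/-- Formula for `HP` (variables `x a` must be `< 10`; `A` in slot `kA`, `X` in slot `kX`). -/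
def hFml (x a kA kX : ℕ) : Fml :=
  .all 10 ((Fml.lt (.var 10) (.var a)).imp
    ((sliceF x 10 kA 11).iff
      (.all 12 (Fml.ex 13 ((Fml.mem (.var 13) kX).and ((Fml.lt (.var 12) (.var 13)).and
        ((eqvFml 13 x 10 kA).and (sliceF 13 10 kA 11))))))))

lemma isArith_hFml {x a kA kX : ℕ} : (hFml x a kA kX).IsArith := by
  simp [hFml, eqvFml, sliceF, pairF, Fml.iff, Fml.and, Fml.ex, Fml.IsArith]

lemma sat_hFml {x a kA kX : ℕ} (hx : x < 10) (ha : a < 10) :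
    Sat S 𝔛 v w (hFml x a kA kX) ↔ HP S (w kA) (w kX) (v x) (v a) := by
  simp only [hFml, sat_all, sat_imp, sat_lt, PTerm.val, sat_iff, sat_ex, sat_and, sat_mem,
    sat_sliceF (show (11:ℕ) ≠ 10 by decide) (show (11:ℕ) ≠ x by omega),
    sat_sliceF (show (11:ℕ) ≠ 10 by decide) (show (11:ℕ) ≠ 13 by decide),
    sat_eqvFml (show (13:ℕ) < 14 by decide) (show x < 14 by omega)
      (show (10:ℕ) < 14 by decide),
    Function.update_apply, HP, EqvP]
  simp only [if_pos rfl, if_neg (show x ≠ 10 by omega), if_neg (show x ≠ 12 by omega),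
    if_neg (show x ≠ 13 by omega), if_neg (show a ≠ 10 by omega),
    if_neg (show (10:ℕ) ≠ 12 by decide), if_neg (show (10:ℕ) ≠ 13 by decide),
    if_neg (show (13:ℕ) ≠ 10 by decide) , if_neg (show (12:ℕ) ≠ 13 by decide)]
  simp

end PAux

namespace PAux

open SatAux

variable {M : Type} {S : AStr M} {𝔛 U : Set (Set M)}

lemma eqvTrans {A : Set M} {y x z c : M} (h1 : EqvP S A y x c) (h2 : EqvP S A x z c) :
    EqvP S A y z c := fun d hd => (h1 d hd).trans (h2 d hd)

lemma eqvSymm {A : Set M} {y x c : M} (h : EqvP S A y x c) : EqvP S A x y c :=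
  fun d hd => (h d hd).symm

lemma eqvMono (hPA : PAminusSem S) {A : Set M} {y x c c' : M} (h : EqvP S A y x c)
    (hle : S.le c' c) : EqvP S A y x c' := fun d hd => h d (ltOfLtLe hPA hd hle)

lemma hpMono (hPA : PAminusSem S) {A X : Set M} {x a a' : M} (h : HP S A X x a)
    (hle : S.le a' a) : HP S A X x a' := fun c hc => h c (ltOfLtLe hPA hc hle)

lemma disMem (hACA : SatACA0 S 𝔛) {A : Set M} (hA : A ∈ 𝔛) (x z a : M) :
    {d | S.lt d a ∧ ¬(x ∈ S.SliceAt A d ↔ z ∈ S.SliceAt A d)} ∈ 𝔛 := by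
  have := hACA.2.2 ((Fml.lt (.var 0) (.var 1)).and
      (.not ((sliceF 2 0 0 4).iff (sliceF 3 0 0 4)))) 0
    (by simp [Fml.and, Fml.iff, sliceF, pairF, Fml.ex, Fml.IsArith])
    (Function.update (Function.update (Function.update (fun _ => S.zero) 1 a) 2 x) 3 z)
    (fun _ => A) (fun _ => hA)
  convert this using 1
  ext d
  simp only [Set.mem_setOf_eq, sat_and, sat_lt, sat_not, sat_iff, PTerm.val,
    sat_sliceF (show (4:ℕ) ≠ 0 by decide) (show (4:ℕ) ≠ 2 by decide),
    sat_sliceF (show (4:ℕ) ≠ 0 by decide) (show (4:ℕ) ≠ 3 by decide),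
    Function.update_apply]
  simp

/-- Coherence: any two hereditarily greedy elements have the same trace. -/
lemma coh (hPA : PAminusSem S) (hACA : SatACA0 S 𝔛) {A X : Set M} (hA : A ∈ 𝔛)
    {x z a : M} (hx : HP S A X x a) (hz : HP S A X z a) : EqvP S A x z a := by
  by_contra hne
  unfold EqvP at hne
  push_neg at hne
  obtain ⟨d, hd, hdiff0⟩ := hne
  have hdiff : ¬(x ∈ S.SliceAt A d ↔ z ∈ S.SliceAt A d) := by tauto
  have hmem : d ∈ {d | S.lt d a ∧ ¬(x ∈ S.SliceAt A d ↔ z ∈ S.SliceAt A d)} := ⟨hd, hdiff⟩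
  obtain ⟨d₀, hd₀mem, hleast⟩ := lnp hPA hACA (disMem hACA hA x z a) hmem
  obtain ⟨hd₀a, hd₀ne⟩ := hd₀mem
  have heqv : EqvP S A x z d₀ := by
    intro d' hd'
    by_contra hne'
    exact hleast d' hd' ⟨ltTrans hPA _ _ _ hd' hd₀a, hne'⟩
  apply hd₀ne
  rw [hx d₀ hd₀a, hz d₀ hd₀a]
  constructor
  · intro h d'
    obtain ⟨y, h1, h2, h3, h4⟩ := h d'
    exact ⟨y, h1, h2, eqvTrans h3 heqv, h4⟩
  · intro h d'
    obtain ⟨y, h1, h2, h3, h4⟩ := h d'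
    exact ⟨y, h1, h2, eqvTrans h3 (eqvSymm heqv), h4⟩

/-- `HP` only depends on the trace below `a`. -/
lemma eqvHP (hPA : PAminusSem S) {A X : Set M} {x z a : M} (hx : HP S A X x a)
    (heq : EqvP S A z x a) : HP S A X z a := by
  intro c hc
  have hc' : EqvP S A z x c := eqvMono hPA heq (Or.inl hc)
  rw [heq c hc, hx c hc]
  constructor
  · intro h d
    obtain ⟨y, h1, h2, h3, h4⟩ := h d
    exact ⟨y, h1, h2, eqvTrans h3 (eqvSymm hc'), h4⟩
  · intro h d
    obtain ⟨y, h1, h2, h3, h4⟩ := h d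
    exact ⟨y, h1, h2, eqvTrans h3 hc', h4⟩

lemma lMem (hACA : SatACA0 S 𝔛) {A X : Set M} (hA : A ∈ 𝔛) (hX : X ∈ 𝔛) :
    {a | ∀ d, ∃ x, x ∈ X ∧ (S.lt d x ∧ (S.lt a x ∧ HP S A X x a))} ∈ 𝔛 := by
  have := hACA.2.2 (Fml.all 1 (Fml.ex 2 ((Fml.mem (.var 2) 1).and
      ((Fml.lt (.var 1) (.var 2)).and ((Fml.lt (.var 0) (.var 2)).and (hFml 2 0 0 1)))))) 0
    (by simp [Fml.and, Fml.ex, Fml.IsArith, isArith_hFml])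
    (fun _ => S.zero) (fun i => if i = 1 then X else A)
    (fun i => by by_cases h : i = 1 <;> simp [h, hA, hX])
  convert this using 1
  ext a
  simp only [Set.mem_setOf_eq, sat_all, sat_ex, sat_and, sat_mem, sat_lt, PTerm.val,
    sat_hFml (show (2:ℕ) < 10 by decide) (show (0:ℕ) < 10 by decide),
    Function.update_apply]
  simp

lemma zaMem (hACA : SatACA0 S 𝔛) {A X : Set M} (hA : A ∈ 𝔛) (hX : X ∈ 𝔛) (a : M) :
    {x | x ∈ X ∧ (S.lt a x ∧ HP S A X x a)} ∈ 𝔛 := by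
  have := hACA.2.2 ((Fml.mem (.var 0) 1).and
      ((Fml.lt (.var 1) (.var 0)).and (hFml 0 1 0 1))) 0
    (by simp [Fml.and, Fml.IsArith, isArith_hFml])
    (Function.update (fun _ => S.zero) 1 a) (fun i => if i = 1 then X else A)
    (fun i => by by_cases h : i = 1 <;> simp [h, hA, hX])
  convert this using 1
  ext x
  simp only [Set.mem_setOf_eq, sat_and, sat_mem, sat_lt, PTerm.val,
    sat_hFml (show (0:ℕ) < 10 by decide) (show (1:ℕ) < 10 by decide),
    Function.update_apply]
  simp

/-- The levels lemma: for every `a` there are unboundedly many `a`-greedy elements. -/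
lemma levels (hPA : PAminusSem S) (hACA : SatACA0 S 𝔛) {A X : Set M}
    (hA : A ∈ 𝔛) (hX : X ∈ 𝔛) (hXu : S.Unb X) :
    ∀ a d, ∃ x, x ∈ X ∧ (S.lt d x ∧ (S.lt a x ∧ HP S A X x a)) := by
  intro a
  refine indAx hACA (lMem hACA hA hX) ?_ ?_ a
  · intro d
    obtain ⟨x, hxX, hdx, h0x⟩ := unbAbove2 hPA hXu d S.zero
    exact ⟨x, hxX, hdx, h0x, fun c hc => absurd hc (notLtZero hPA c)⟩
  · intro a ih d
    obtain ⟨x₀, hx₀X, -, hax₀, hHx₀⟩ := ih S.zero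
    by_cases hcl : ∀ d', ∃ y, y ∈ X ∧ (S.lt d' y ∧ (EqvP S A y x₀ a ∧ y ∈ S.SliceAt A a))
    · obtain ⟨m, hdm, ham⟩ := exMax hPA d (S.add a S.one)
      obtain ⟨y, hyX, hmy, hyeqv, hysl⟩ := hcl m
      have hHy : HP S A X y a := eqvHP hPA hHx₀ hyeqv
      refine ⟨y, hyX, ltOfLeLt hPA hdm hmy, ltOfLeLt hPA ham hmy, ?_⟩
      intro c hc
      rcases (ltSuccIff hPA).mp hc with hlt | rfl
      · exact hHy c hlt
      · constructor
        · intro _ d'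
          obtain ⟨y', h1, h2, h3, h4⟩ := hcl d'
          exact ⟨y', h1, h2, eqvTrans h3 (eqvSymm hyeqv), h4⟩
        · intro _
          exact hysl
    · push_neg at hcl
      obtain ⟨b, hb⟩ := hcl
      have hb' : ∀ y, y ∈ X → S.lt b y → EqvP S A y x₀ a → y ∉ S.SliceAt A a :=
        fun y h1 h2 h3 h4 => hb y h1 h2 h3 h4
      obtain ⟨m, hm1, hm2⟩ := exMax hPA d (S.add a S.one)
      obtain ⟨m', hm'1, hm'2⟩ := exMax hPA m b
      obtain ⟨x, hxX, hmx, -, hHx⟩ := ih m'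
      have heqv : EqvP S A x x₀ a := coh hPA hACA hA hHx hHx₀
      have hxsl : x ∉ S.SliceAt A a := hb' x hxX (ltOfLeLt hPA hm'2 hmx) heqv
      refine ⟨x, hxX, ltOfLeLt hPA (leTrans' hPA hm1 hm'1) hmx,
        ltOfLeLt hPA (leTrans' hPA hm2 hm'1) hmx, ?_⟩
      intro c hc
      rcases (ltSuccIff hPA).mp hc with hlt | rfl
      · exact hHx c hlt
      · constructor
        · intro h
          exact absurd h hxsl
        · intro hall
          exfalso
          obtain ⟨y, h1, h2, h3, h4⟩ := hall b
          exact hb' y h1 h2 (eqvTrans h3 heqv) h4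

/-- `PPP S A X x a`: `x` is the least `a`-greedy element above `a`. -/
def PPP (S : AStr M) (A X : Set M) (x a : M) : Prop :=
  x ∈ X ∧ (S.lt a x ∧ (HP S A X x a ∧
    ∀ x', S.lt x' x → ¬(x' ∈ X ∧ (S.lt a x' ∧ HP S A X x' a))))

def ppFml (x a : ℕ) : Fml :=
  (Fml.mem (.var x) 1).and ((Fml.lt (.var a) (.var x)).and ((hFml x a 0 1).and
    (.all 9 ((Fml.lt (.var 9) (.var x)).imp (.not ((Fml.mem (.var 9) 1).and
      ((Fml.lt (.var a) (.var 9)).and (hFml 9 a 0 1))))))))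

lemma isArith_ppFml {x a : ℕ} : (ppFml x a).IsArith := by
  simp [ppFml, Fml.and, Fml.IsArith, isArith_hFml]

lemma sat_ppFml {v : ℕ → M} {w : ℕ → Set M} {x a : ℕ} (hx : x < 9) (ha : a < 9) :
    Sat S 𝔛 v w (ppFml x a) ↔ PPP S (w 0) (w 1) (v x) (v a) := by
  simp only [ppFml, sat_and, sat_mem, sat_lt, sat_all, sat_imp, sat_not, PTerm.val,
    sat_hFml (show x < 10 by omega) (show a < 10 by omega),
    sat_hFml (show (9:ℕ) < 10 by decide) (show a < 10 by omega),
    Function.update_apply, PPP]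
  simp only [if_pos rfl, if_neg (show x ≠ 9 by omega), if_neg (show a ≠ 9 by omega)]
  simp

lemma yMem (hACA : SatACA0 S 𝔛) {A X : Set M} (hA : A ∈ 𝔛) (hX : X ∈ 𝔛) :
    {x | ∃ a, PPP S A X x a} ∈ 𝔛 := by
  have := hACA.2.2 (Fml.ex 1 (ppFml 0 1)) 0
    (by simp [Fml.ex, Fml.IsArith, isArith_ppFml])
    (fun _ => S.zero) (fun i => if i = 1 then X else A)
    (fun i => by by_cases h : i = 1 <;> simp [h, hA, hX])
  convert this using 1
  ext x
  simp only [Set.mem_setOf_eq, sat_ex,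
    sat_ppFml (show (0:ℕ) < 9 by decide) (show (1:ℕ) < 9 by decide),
    Function.update_apply]
  simp

lemma clMem (hACA : SatACA0 S 𝔛) {A X : Set M} (hA : A ∈ 𝔛) (hX : X ∈ 𝔛) :
    {a | ∃ m, ∀ a', S.lt a' a → ∀ x, PPP S A X x a' → S.le x m} ∈ 𝔛 := by
  have := hACA.2.2 (Fml.ex 1 (.all 2 ((Fml.lt (.var 2) (.var 0)).imp
      (.all 3 ((ppFml 3 2).imp ((Fml.lt (.var 3) (.var 1)).or
        (.eq (.var 3) (.var 1)))))))) 0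
    (by simp [Fml.ex, Fml.or, Fml.and, Fml.IsArith, isArith_ppFml])
    (fun _ => S.zero) (fun i => if i = 1 then X else A)
    (fun i => by by_cases h : i = 1 <;> simp [h, hA, hX])
  convert this using 1
  ext a
  simp only [Set.mem_setOf_eq, sat_ex, sat_all, sat_imp, sat_lt, sat_or, sat_eq, PTerm.val,
    sat_ppFml (show (3:ℕ) < 9 by decide) (show (2:ℕ) < 9 by decide),
    Function.update_apply, AStr.le]
  simp

lemma bMem (hACA : SatACA0 S 𝔛) {A Y : Set M} (hA : A ∈ 𝔛) (hY : Y ∈ 𝔛) :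
    {a | ∃ b, ∀ x, x ∈ Y → S.lt b x → x ∈ S.SliceAt A a} ∈ 𝔛 := by
  have := hACA.2.2 (Fml.ex 1 (.all 2 ((Fml.mem (.var 2) 1).imp
      ((Fml.lt (.var 1) (.var 2)).imp (sliceF 2 0 0 3))))) 0
    (by simp [Fml.ex, sliceF, pairF, Fml.and, Fml.IsArith])
    (fun _ => S.zero) (fun i => if i = 1 then Y else A)
    (fun i => by by_cases h : i = 1 <;> simp [h, hA, hY])
  convert this using 1
  ext a
  simp only [Set.mem_setOf_eq, sat_ex, sat_all, sat_imp, sat_mem, sat_lt, PTerm.val,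
    sat_sliceF (show (3:ℕ) ≠ 0 by decide) (show (3:ℕ) ≠ 2 by decide),
    Function.update_apply]
  simp

lemma ppExists (hPA : PAminusSem S) (hACA : SatACA0 S 𝔛) {A X : Set M}
    (hA : A ∈ 𝔛) (hX : X ∈ 𝔛) (hXu : S.Unb X) (a : M) : ∃ x, PPP S A X x a := by
  obtain ⟨x₁, hx₁⟩ : ∃ x, x ∈ {x | x ∈ X ∧ (S.lt a x ∧ HP S A X x a)} := by
    obtain ⟨x, h1, h2, h3, h4⟩ := levels hPA hACA hA hX hXu a S.zero
    exact ⟨x, h1, h3, h4⟩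
  obtain ⟨x, hx, hleast⟩ := lnp hPA hACA (zaMem hACA hA hX a) hx₁
  exact ⟨x, hx.1, hx.2.1, hx.2.2, fun x' hx' hmem => hleast x' hx' hmem⟩

lemma ppUnique (hPA : PAminusSem S) {A X : Set M} {x z a : M}
    (hx : PPP S A X x a) (hz : PPP S A X z a) : x = z := by
  rcases trich hPA x z with hlt | heq | hgt
  · exact absurd ⟨hx.1, hx.2.1, hx.2.2.1⟩ (hz.2.2.2 x hlt)
  · exact heq
  · exact absurd ⟨hz.1, hz.2.1, hz.2.2.1⟩ (hx.2.2.2 z hgt)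

lemma collect (hPA : PAminusSem S) (hACA : SatACA0 S 𝔛) {A X : Set M}
    (hA : A ∈ 𝔛) (hX : X ∈ 𝔛) (hXu : S.Unb X) (a : M) :
    ∃ m, ∀ a', S.lt a' a → ∀ x, PPP S A X x a' → S.le x m := by
  refine indAx hACA (clMem hACA hA hX) ⟨S.zero, fun a' ha' => absurd ha' (notLtZero hPA a')⟩
    ?_ a
  rintro a ⟨m, hm⟩
  obtain ⟨xa, hxa⟩ := ppExists hPA hACA hA hX hXu a
  obtain ⟨m', hm'1, hm'2⟩ := exMax hPA m xa
  refine ⟨m', fun a' ha' x hx => ?_⟩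
  rcases (ltSuccIff hPA).mp ha' with hlt | rfl
  · exact leTrans' hPA (hm a' hlt x hx) hm'1
  · exact (ppUnique hPA hx hxa) ▸ hm'2

/-- The set of least greedy witnesses. -/
def Yset (S : AStr M) (A X : Set M) : Set M := {x | ∃ a, PPP S A X x a}

lemma ySub {A X : Set M} : Yset S A X ⊆ X := fun _ ⟨_, h⟩ => h.1

lemma yUnb (hPA : PAminusSem S) (hACA : SatACA0 S 𝔛) {A X : Set M}
    (hA : A ∈ 𝔛) (hX : X ∈ 𝔛) (hXu : S.Unb X) : S.Unb (Yset S A X) := by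
  intro d
  obtain ⟨x, hx⟩ := ppExists hPA hACA hA hX hXu d
  exact ⟨x, ⟨d, hx⟩, hx.2.1⟩

/-- The key property: `Yset` eventually decides every slice of `A`. -/
lemma yDecides (hPA : PAminusSem S) (hACA : SatACA0 S 𝔛) {A X : Set M}
    (hA : A ∈ 𝔛) (hX : X ∈ 𝔛) (hXu : S.Unb X) (a : M) :
    (∃ b, ∀ x, x ∈ Yset S A X → S.lt b x → x ∈ S.SliceAt A a) ∨
    (∃ b, ∀ x, x ∈ Yset S A X → S.lt b x → x ∉ S.SliceAt A a) := by
  obtain ⟨m, hm⟩ := collect hPA hACA hA hX hXu (S.add a S.one)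
  have hpair : ∀ x z, x ∈ Yset S A X → z ∈ Yset S A X → S.lt m x → S.lt m z →
      (x ∈ S.SliceAt A a ↔ z ∈ S.SliceAt A a) := by
    have key : ∀ x, x ∈ Yset S A X → S.lt m x → HP S A X x (S.add a S.one) := by
      rintro x ⟨a₁, hx⟩ hmx
      have ha₁ : ¬ S.lt a₁ (S.add a S.one) := by
        intro hlt
        exact ltIrrefl hPA x (ltOfLeLt hPA (hm a₁ hlt x hx) hmx)
      exact hpMono hPA hx.2.2.1 (leOfNotLt hPA ha₁)
    intro x z hxY hzY hmx hmz
    exact coh hPA hACA hA (key x hxY hmx) (key z hzY hmz) a (ltSuccSelf hPA a)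
  obtain ⟨x₀, hx₀Y, hmx₀⟩ := yUnb hPA hACA hA hX hXu m
  by_cases hsl : x₀ ∈ S.SliceAt A a
  · exact Or.inl ⟨m, fun x hxY hmx => (hpair x x₀ hxY hx₀Y hmx hmx₀).mpr hsl⟩
  · exact Or.inr ⟨m, fun x hxY hmx hmem =>
      hsl ((hpair x x₀ hxY hx₀Y hmx hmx₀).mp hmem)⟩

end PAux

namespace PAux

open SatAux

variable {M : Type} {S : AStr M} {𝔛 U : Set (Set M)}

/-- The formula expressing "set slot 0 eventually decides every slice of set slot 1". -/
def decFml : Fml :=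
  .all 0 ((Fml.ex 1 (.all 2 ((Fml.mem (.var 2) 0).imp
      ((Fml.lt (.var 1) (.var 2)).imp (sliceF 2 0 1 3))))).or
    (Fml.ex 1 (.all 2 ((Fml.mem (.var 2) 0).imp
      ((Fml.lt (.var 1) (.var 2)).imp (.not (sliceF 2 0 1 3)))))))

lemma sat_decFml {Y A : Set M} {v : ℕ → M} {w : ℕ → Set M}
    (hw0 : w 0 = Y) (hw1 : w 1 = A) :
    Sat S 𝔛 v w decFml ↔ ∀ a,
      (∃ b, ∀ x, x ∈ Y → S.lt b x → x ∈ S.SliceAt A a) ∨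
      (∃ b, ∀ x, x ∈ Y → S.lt b x → x ∉ S.SliceAt A a) := by
  subst hw0 hw1
  simp only [decFml, sat_all, sat_or, sat_ex, sat_imp, sat_mem, sat_lt, sat_not, PTerm.val,
    sat_sliceF (show (3:ℕ) ≠ 0 by decide) (show (3:ℕ) ≠ 2 by decide),
    Function.update_apply]
  simp

/-- The definability half of Statement 12. -/
lemma defPart (hPA : PAminusSem S) (hACA : SatACA0 S 𝔛)
    (hUltra : IsUltraOn (S.PX 𝔛) U)
    (hGen : ∀ D : Set (Set M), D ⊆ S.PX 𝔛 →
      (∀ X ∈ S.PX 𝔛, ∃ Y ∈ D, Y ⊆ X) →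
      (∃ (φ : Fml) (k : ℕ) (v : ℕ → M) (w : ℕ → Set M), (∀ i, w i ∈ 𝔛) ∧
        D = {X | X ∈ S.PX 𝔛 ∧ Sat S 𝔛 v (Function.update w k X) φ}) →
      (U ∩ D).Nonempty) :
    S.DefinableFam 𝔛 U := by
  intro A hA
  set v₀ : ℕ → M := fun _ => S.zero with hv₀
  set wA : ℕ → Set M := fun _ => A with hwA
  set D : Set (Set M) := {Y | Y ∈ S.PX 𝔛 ∧ Sat S 𝔛 v₀ (Function.update wA 0 Y) decFml}
    with hD
  have hsat : ∀ Y : Set M, Sat S 𝔛 v₀ (Function.update wA 0 Y) decFml ↔ ∀ a,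
      (∃ b, ∀ x, x ∈ Y → S.lt b x → x ∈ S.SliceAt A a) ∨
      (∃ b, ∀ x, x ∈ Y → S.lt b x → x ∉ S.SliceAt A a) :=
    fun Y => sat_decFml (by simp [hwA]) (by simp [hwA])
  have hdense : ∀ X ∈ S.PX 𝔛, ∃ Y ∈ D, Y ⊆ X := by
    rintro X ⟨hX𝔛, hXu⟩
    refine ⟨Yset S A X, ⟨⟨yMem hACA hA hX𝔛, yUnb hPA hACA hA hX𝔛 hXu⟩, ?_⟩, ySub⟩
    rw [hsat]
    exact fun a => yDecides hPA hACA hA hX𝔛 hXu a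
  obtain ⟨Y₀, hY₀U, hY₀D⟩ := hGen D (fun Y hY => hY.1) hdense
    ⟨decFml, 0, v₀, wA, fun _ => hA, rfl⟩
  have hY₀dec := (hsat Y₀).mp hY₀D.2
  obtain ⟨hY₀𝔛, hY₀u⟩ := memPX_of_memU hUltra hY₀U
  have hBeq : {a : M | S.SliceAt A a ∈ U} =
      {a | ∃ b, ∀ x, x ∈ Y₀ → S.lt b x → x ∈ S.SliceAt A a} := by
    ext a
    simp only [Set.mem_setOf_eq]
    constructor
    · intro hslU
      rcases hY₀dec a with h | ⟨b, hb⟩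
      · exact h
      · exfalso
        obtain ⟨x, hxsl, hxY₀, hbx⟩ := interUnbU hPA hUltra hslU hY₀U b
        exact hb x hxY₀ hbx hxsl
    · rintro ⟨b, hb⟩
      have hslPX : S.SliceAt A a ∈ S.PX 𝔛 := by
        refine ⟨sliceMem hACA hA a, fun d => ?_⟩
        obtain ⟨x, hxY₀, hdx, hbx⟩ := unbAbove2 hPA hY₀u d b
        exact ⟨x, hb x hxY₀ hbx, hdx⟩
      exact almostSupsetU hPA hACA hUltra hslPX hY₀U hb
  rw [hBeq]
  exact bMem hACA hA hY₀𝔛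

end PAux


/-- If `(M,𝔛) ⊨ ACA₀` and `U` is a generic ultrafilter on `P_𝔛`
(meeting every dense subset of `P_𝔛` that is parameter-definable in `(M,𝔛)`),
then `U` is complete and definable. -/
theorem generic_ultrafilter_complete_definable
    {M : Type} (S : AStr M) (𝔛 U : Set (Set M))
    (hACA : SatACA0 S 𝔛)
    (hUltra : IsUltraOn (S.PX 𝔛) U)
    (hGen : ∀ D : Set (Set M), D ⊆ S.PX 𝔛 →
      (∀ X ∈ S.PX 𝔛, ∃ Y ∈ D, Y ⊆ X) →
      (∃ (φ : Fml) (k : ℕ) (v : ℕ → M) (w : ℕ → Set M), (∀ i, w i ∈ 𝔛) ∧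
        D = {X | X ∈ S.PX 𝔛 ∧ Sat S 𝔛 v (Function.update w k X) φ}) →
      (U ∩ D).Nonempty) :
    S.CompleteOn 𝔛 U ∧ S.DefinableFam 𝔛 U := by
  exact ⟨PAux.completePart hACA.1 hACA hUltra hGen, PAux.defPart hACA.1 hACA hUltra hGen⟩

end Paper
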